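/- arXiv:2604.24392 — 5 statements merged into one kernel-verified Lean document; each statement's English description precedes it below -/
import Mathlib

section
/- Let d, d' ≥ 1 and let f : ℝ^d × ℝ^{d'} × ℝ^{d'×d} → ℝ^{d'} satisfy: (i) |f(x,y,z) − f(x,y',z')| ≤ K_y·|y − y'| + K_z·‖z − z'‖ for all x ∈ ℝ^d, y, y' ∈ ℝ^{d'}, z, z' ∈ ℝ^{d'×d}; and (ii) ⟨f(x,y,z) − f(x,y',z), y − y'⟩ ≤ −μ·|y − y'|² for all x, y, y', z, where 0 ≤ μ ≤ K_y. Then for every a ≥ 0 and all x ∈ ℝ^d, y, y' ∈ ℝ^{d'}, z, z' ∈ ℝ^{d'×d}: |f(x,y,z) + a·y − f(x,y',z') − a·y'| ≤ √(K_y² − 2μa + a²)·|y − y'| + K_z·‖z − z'‖. -/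
open scoped RealInnerProductSpace

lemma aux_shift {E : Type*} [NormedAddCommGroup E] [InnerProductSpace ℝ E]
    (v w : E) (Ky μ a : ℝ) (hμ0 : 0 ≤ μ) (hμK : μ ≤ Ky) (ha : 0 ≤ a)
    (hv : ‖v‖ ≤ Ky * ‖w‖) (hm : ⟪v, w⟫ ≤ -μ * ‖w‖ ^ 2) :
    ‖v + a • w‖ ≤ Real.sqrt (Ky ^ 2 - 2 * μ * a + a ^ 2) * ‖w‖ := by
  have hK0 : 0 ≤ Ky := le_trans hμ0 hμK
  have hC : 0 ≤ Ky ^ 2 - 2 * μ * a + a ^ 2 := by nlinarith [sq_nonneg (a - μ), sq_nonneg Ky]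
  have hsq : ‖v + a • w‖ ^ 2 ≤ (Ky ^ 2 - 2 * μ * a + a ^ 2) * ‖w‖ ^ 2 := by
    have hexp : ‖v + a • w‖ ^ 2 = ‖v‖ ^ 2 + 2 * a * ⟪v, w⟫ + a ^ 2 * ‖w‖ ^ 2 := by
      rw [← real_inner_self_eq_norm_sq, ← real_inner_self_eq_norm_sq,
        ← real_inner_self_eq_norm_sq]
      simp only [inner_add_add_self, real_inner_smul_left, real_inner_smul_right]
      rw [real_inner_comm w v]; ring
    have hv2 : ‖v‖ ^ 2 ≤ Ky ^ 2 * ‖w‖ ^ 2 := by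
      nlinarith [norm_nonneg v, norm_nonneg w]
    nlinarith [norm_nonneg w]
  calc ‖v + a • w‖ = Real.sqrt (‖v + a • w‖ ^ 2) := by
        rw [Real.sqrt_sq (norm_nonneg _)]
    _ ≤ Real.sqrt ((Ky ^ 2 - 2 * μ * a + a ^ 2) * ‖w‖ ^ 2) := Real.sqrt_le_sqrt hsq
    _ = Real.sqrt (Ky ^ 2 - 2 * μ * a + a ^ 2) * ‖w‖ := by
        rw [Real.sqrt_mul hC, Real.sqrt_sq (norm_nonneg w)]

/-- If `f(x,y,z)` is `K_y`-Lipschitz in `y`, `K_z`-Lipschitz in `z` (matrix `2`-norm, i.e.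
operator norm of the associated linear map `ℝ^d → ℝ^{d'}`) and `(−μ)`-monotone in `y` with
`0 ≤ μ ≤ K_y`, then for every `a ≥ 0`,
`|f(x,y,z) + a·y − f(x,y',z') − a·y'| ≤ √(K_y² − 2μa + a²)|y − y'| + K_z‖z − z'‖`. -/
theorem lipschitz_shift_generator
    (d d' : ℕ) (hd : 1 ≤ d) (hd' : 1 ≤ d')
    (f : EuclideanSpace ℝ (Fin d) → EuclideanSpace ℝ (Fin d') →
         (EuclideanSpace ℝ (Fin d) →L[ℝ] EuclideanSpace ℝ (Fin d')) →
         EuclideanSpace ℝ (Fin d'))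
    (Ky Kz μ : ℝ) (hμ0 : 0 ≤ μ) (hμK : μ ≤ Ky)
    (hLip : ∀ x y y' z z', ‖f x y z - f x y' z'‖ ≤ Ky * ‖y - y'‖ + Kz * ‖z - z'‖)
    (hMono : ∀ x y y' z, ⟪f x y z - f x y' z, y - y'⟫ ≤ -μ * ‖y - y'‖ ^ 2)
    (a : ℝ) (ha : 0 ≤ a) :
    ∀ x y y' z z', ‖f x y z + a • y - (f x y' z' + a • y')‖ ≤
      Real.sqrt (Ky ^ 2 - 2 * μ * a + a ^ 2) * ‖y - y'‖ + Kz * ‖z - z'‖ := by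
  intro x y y' z z'
  have hv : ‖f x y z - f x y' z‖ ≤ Ky * ‖y - y'‖ := by
    have := hLip x y y' z z
    simpa using this
  have hg2 : ‖f x y' z - f x y' z'‖ ≤ Kz * ‖z - z'‖ := by
    have := hLip x y' y' z z'
    simpa using this
  have key := aux_shift (f x y z - f x y' z) (y - y') Ky μ a hμ0 hμK ha hv
    (hMono x y y' z)
  have hdecomp : f x y z + a • y - (f x y' z' + a • y') =
      (f x y z - f x y' z + a • (y - y')) + (f x y' z - f x y' z') := by
    rw [smul_sub]; abel
  rw [hdecomp]
  calc ‖(f x y z - f x y' z + a • (y - y')) + (f x y' z - f x y' z')‖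
      ≤ ‖f x y z - f x y' z + a • (y - y')‖ + ‖f x y' z - f x y' z'‖ := norm_add_le _ _
    _ ≤ Real.sqrt (Ky ^ 2 - 2 * μ * a + a ^ 2) * ‖y - y'‖ + Kz * ‖z - z'‖ :=
        add_le_add key hg2
end

section
/- Let r' ≥ 0 and C₀ ≥ 0, and let φ : ℝ^d → ℝ^m be twice continuously differentiable with ‖∇²φ(x)‖ ≤ C₀·(1 + |x|^{r'}) for all x ∈ ℝ^d. Then there exists a constant C ≥ 0, depending only on d, m, r' and C₀ (in particular not on the grid), such that for every mesh size δ > 0 and every box subgrid Π of δℤ^d with convex hull Box: sup_{x∈Box} ‖Pφ(x) − φ(x)‖/(1 + |x|^{r'}) ≤ C·δ²·(1 + δ^{r'}). -/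
noncomputable section

/-- The grid point `δ·k` of `δℤ^d`, viewed in `ℝ^d`. -/
def gridPt (d : ℕ) (δ : ℝ) (k : Fin d → ℤ) : EuclideanSpace ℝ (Fin d) :=
  WithLp.toLp 2 (fun i => δ * k i)

/-- The metric projection of `x ∈ ℝ^d` onto the closed convex box
`Box = ∏_i [δ m_i, δ M_i]` (for the Euclidean norm it is the coordinatewise clamp). -/
def boxProj (d : ℕ) (δ : ℝ) (mlo Mhi : Fin d → ℤ) (x : EuclideanSpace ℝ (Fin d)) :
    EuclideanSpace ℝ (Fin d) :=
  WithLp.toLp 2 (fun i => max (δ * mlo i) (min (x i) (δ * Mhi i)))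

/-- The hat basis function `ψ_z(x) = ∏_i max(0, 1 − |x_i − z_i|/δ)`. -/
def hatFn (d : ℕ) (δ : ℝ) (z x : EuclideanSpace ℝ (Fin d)) : ℝ :=
  ∏ i, max 0 (1 - |x i - z i| / δ)

/-- The multilinear interpolation operator
`Pφ(x) = Σ_{z∈Π} ψ_z(Proj(x, Box)) φ(z)` on the box subgrid `Π = {δk : m ≤ k ≤ M}`. -/
def interp {E : Type*} [AddCommGroup E] [Module ℝ E]
    (d : ℕ) (δ : ℝ) (mlo Mhi : Fin d → ℤ)
    (φ : EuclideanSpace ℝ (Fin d) → E) (x : EuclideanSpace ℝ (Fin d)) : E :=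
  ∑ k ∈ Finset.Icc mlo Mhi,
    hatFn d δ (gridPt d δ k) (boxProj d δ mlo Mhi x) • φ (gridPt d δ k)


open Finset

section AuxSum

lemma hat1d (mo Mo : ℤ) (hMo : mo ≤ Mo) : ∀ t : ℝ, (mo:ℝ) ≤ t → t ≤ (Mo:ℝ) →
    (∑ k ∈ Finset.Icc mo Mo, max 0 (1 - |t - (k:ℝ)|)) = 1 ∧
    (∑ k ∈ Finset.Icc mo Mo, max 0 (1 - |t - (k:ℝ)|) * ((k:ℝ) - t)) = 0 := by
  refine Int.le_induction (motive := fun Mo _ => ∀ t : ℝ, (mo:ℝ) ≤ t → t ≤ (Mo:ℝ) →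
    (∑ k ∈ Finset.Icc mo Mo, max 0 (1 - |t - (k:ℝ)|)) = 1 ∧
    (∑ k ∈ Finset.Icc mo Mo, max 0 (1 - |t - (k:ℝ)|) * ((k:ℝ) - t)) = 0) ?_ ?_ Mo hMo
  · intro t h1 h2
    have ht : t = (mo:ℝ) := le_antisymm h2 h1
    subst ht
    simp
  · intro M hM ih t h1 h2
    have hcast : ((M + 1 : ℤ) : ℝ) = (M : ℝ) + 1 := by push_cast; ring
    rcases le_or_gt t (M:ℝ) with hle | hlt
    · -- terms above M vanish
      obtain ⟨ihs, ihw⟩ := ih t h1 hle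
      have hsub : Finset.Icc mo M ⊆ Finset.Icc mo (M + 1) :=
        Finset.Icc_subset_Icc_right (by omega)
      have hvan : ∀ k ∈ Finset.Icc mo (M+1), k ∉ Finset.Icc mo M →
          max 0 (1 - |t - (k:ℝ)|) = 0 := by
        intro k hk hk'
        simp only [Finset.mem_Icc] at hk hk'
        have hkM : M + 1 ≤ k := by omega
        have : (1:ℝ) ≤ |t - (k:ℝ)| := by
          have : ((M:ℝ)) + 1 ≤ (k:ℝ) := by exact_mod_cast hkM
          rw [abs_sub_comm, abs_of_nonneg (by linarith)]
          linarith
        exact max_eq_left (by linarith)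
      constructor
      · rw [← Finset.sum_subset hsub hvan]; exact ihs
      · rw [← Finset.sum_subset hsub (fun k hk hk' => by rw [hvan k hk hk', zero_mul])]
        exact ihw
    · -- only k = M, M+1 contribute
      have hp : ({M, M + 1} : Finset ℤ) ⊆ Finset.Icc mo (M+1) := by
        intro k hk
        simp only [Finset.mem_insert, Finset.mem_singleton] at hk
        rcases hk with rfl | rfl <;> simp [Finset.mem_Icc] <;> omega
      have hvan : ∀ k ∈ Finset.Icc mo (M+1), k ∉ ({M, M + 1} : Finset ℤ) →
          max 0 (1 - |t - (k:ℝ)|) = 0 := by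
        intro k hk hk'
        simp only [Finset.mem_Icc] at hk
        simp only [Finset.mem_insert, Finset.mem_singleton] at hk'
        push_neg at hk'
        have hkM : k ≤ M - 1 := by omega
        have hkr : (k:ℝ) ≤ (M:ℝ) - 1 := by exact_mod_cast hkM
        have : (1:ℝ) < |t - (k:ℝ)| := by
          rw [abs_of_nonneg (by linarith)]; linarith
        exact max_eq_left (by linarith)
      have hne : M ≠ M + 1 := by omega
      have e1 : |t - (M:ℝ)| = t - (M:ℝ) := abs_of_nonneg (by linarith)
      have e2 : |t - ((M+1:ℤ):ℝ)| = (M:ℝ) + 1 - t := by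
        rw [hcast, abs_of_nonpos (by linarith [h2, hcast])]
        ring
      have h2' : t ≤ (M:ℝ) + 1 := by rw [hcast] at h2; exact h2
      have vM : max 0 (1 - |t - (M:ℝ)|) = 1 - (t - (M:ℝ)) := by
        rw [e1]; exact max_eq_right (by linarith)
      have vM1 : max 0 (1 - |t - ((M+1:ℤ):ℝ)|) = t - (M:ℝ) := by
        rw [e2]; rw [show (1:ℝ) - ((M:ℝ) + 1 - t) = t - (M:ℝ) by ring]
        exact max_eq_right (by linarith)
      constructor
      · rw [← Finset.sum_subset hp hvan, Finset.sum_pair hne, vM, vM1]; ring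
      · rw [← Finset.sum_subset hp (fun k hk hk' => by rw [hvan k hk hk', zero_mul]),
          Finset.sum_pair hne, vM, vM1, hcast]
        ring

lemma hat_eq {d : ℕ} {δ : ℝ} (hδ : 0 < δ) (k : Fin d → ℤ) (x : EuclideanSpace ℝ (Fin d)) :
    hatFn d δ (gridPt d δ k) x = ∏ i, max 0 (1 - |x i / δ - (k i : ℝ)|) := by
  unfold hatFn gridPt
  refine Finset.prod_congr rfl fun i _ => ?_
  congr 2
  rw [show x i - δ * (k i : ℝ) = (x i / δ - (k i : ℝ)) * δ by field_simp,
    abs_mul, abs_of_pos hδ, mul_div_assoc, div_self hδ.ne', mul_one]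


lemma hat_nonneg (d : ℕ) (δ : ℝ) (z x : EuclideanSpace ℝ (Fin d)) :
    0 ≤ hatFn d δ z x :=
  Finset.prod_nonneg fun i _ => le_max_left _ _

lemma coord_bounds {d : ℕ} {δ : ℝ} (hδ : 0 < δ) {mlo Mhi : Fin d → ℤ}
    {x : EuclideanSpace ℝ (Fin d)} (hx : ∀ i, δ * mlo i ≤ x i ∧ x i ≤ δ * Mhi i) (i : Fin d) :
    (mlo i : ℝ) ≤ x i / δ ∧ x i / δ ≤ (Mhi i : ℝ) := by
  constructor
  · rw [le_div_iff₀ hδ]; linarith [(hx i).1, mul_comm δ (mlo i : ℝ)]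
  · rw [div_le_iff₀ hδ]; linarith [(hx i).2, mul_comm δ (Mhi i : ℝ)]


lemma hat_partition {d : ℕ} {δ : ℝ} (hδ : 0 < δ) {mlo Mhi : Fin d → ℤ}
    (hmM : ∀ i, mlo i ≤ Mhi i) {x : EuclideanSpace ℝ (Fin d)}
    (hx : ∀ i, δ * mlo i ≤ x i ∧ x i ≤ δ * Mhi i) :
    ∑ k ∈ Finset.Icc mlo Mhi, hatFn d δ (gridPt d δ k) x = 1 := by
  have e : ∀ k ∈ Finset.Icc mlo Mhi, hatFn d δ (gridPt d δ k) x
      = ∏ i, max 0 (1 - |x i / δ - (k i : ℝ)|) := fun k _ => hat_eq hδ k x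
  rw [Finset.sum_congr rfl e, Pi.Icc_eq,
    ← Finset.prod_univ_sum (fun i => Finset.Icc (mlo i) (Mhi i))
      (fun i n => max 0 (1 - |x i / δ - (n : ℝ)|))]
  rw [Finset.prod_eq_one fun i _ => (hat1d _ _ (hmM i) _ (coord_bounds hδ hx i).1
    (coord_bounds hδ hx i).2).1]


lemma hat_weighted {d : ℕ} {δ : ℝ} (hδ : 0 < δ) {mlo Mhi : Fin d → ℤ}
    (hmM : ∀ i, mlo i ≤ Mhi i) {x : EuclideanSpace ℝ (Fin d)}
    (hx : ∀ i, δ * mlo i ≤ x i ∧ x i ≤ δ * Mhi i) (j : Fin d) :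
    ∑ k ∈ Finset.Icc mlo Mhi, hatFn d δ (gridPt d δ k) x * (δ * k j - x j) = 0 := by
  classical
  set F : Fin d → ℤ → ℝ := fun i n =>
    if i = j then max 0 (1 - |x i / δ - (n : ℝ)|) * ((n : ℝ) - x j / δ) else
      max 0 (1 - |x i / δ - (n : ℝ)|) with hF
  have e : ∀ k ∈ Finset.Icc mlo Mhi,
      hatFn d δ (gridPt d δ k) x * (δ * k j - x j) = δ * ∏ i, F i (k i) := by
    intro k _
    rw [hat_eq hδ k x]
    have h1 : (∏ i, F i (k i))
        = (∏ i, max 0 (1 - |x i / δ - (k i : ℝ)|)) * ((k j : ℝ) - x j / δ) := by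
      rw [← Finset.mul_prod_erase Finset.univ _ (Finset.mem_univ j),
        ← Finset.mul_prod_erase Finset.univ (fun i => max 0 (1 - |x i / δ - (k i : ℝ)|))
          (Finset.mem_univ j)]
      simp only [hF, if_pos rfl]
      rw [Finset.prod_congr rfl (fun i hi => by
        rw [if_neg (Finset.mem_erase.mp hi).1])]
      ring
    rw [h1]
    have h2 : δ * ((k j : ℝ) - x j / δ) = δ * k j - x j := by field_simp
    rw [← h2]; ring
  rw [Finset.sum_congr rfl e, ← Finset.mul_sum, Pi.Icc_eq,
    ← Finset.prod_univ_sum (fun i => Finset.Icc (mlo i) (Mhi i)) F]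
  have hj0 : (∑ n ∈ Finset.Icc (mlo j) (Mhi j), F j n) = 0 := by
    simp only [hF, if_pos rfl]
    exact (hat1d _ _ (hmM j) _ (coord_bounds hδ hx j).1 (coord_bounds hδ hx j).2).2
  rw [Finset.prod_eq_zero (Finset.mem_univ j) hj0, mul_zero]

lemma hat_weighted_vec {d : ℕ} {δ : ℝ} (hδ : 0 < δ) {mlo Mhi : Fin d → ℤ}
    (hmM : ∀ i, mlo i ≤ Mhi i) {x : EuclideanSpace ℝ (Fin d)}
    (hx : ∀ i, δ * mlo i ≤ x i ∧ x i ≤ δ * Mhi i) :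
    ∑ k ∈ Finset.Icc mlo Mhi, hatFn d δ (gridPt d δ k) x • (gridPt d δ k - x)
      = (0 : EuclideanSpace ℝ (Fin d)) := by
  ext j
  rw [PiLp.zero_apply]
  have : (∑ k ∈ Finset.Icc mlo Mhi, hatFn d δ (gridPt d δ k) x • (gridPt d δ k - x)) j
      = ∑ k ∈ Finset.Icc mlo Mhi, hatFn d δ (gridPt d δ k) x * (δ * k j - x j) := by
    rw [WithLp.ofLp_sum, Finset.sum_apply]
    refine Finset.sum_congr rfl fun k _ => ?_
    rw [PiLp.smul_apply, PiLp.sub_apply, smul_eq_mul]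
    rfl
  rw [this, hat_weighted hδ hmM hx j]


lemma hat_support {d : ℕ} {δ : ℝ} (hδ : 0 < δ) (k : Fin d → ℤ)
    (x : EuclideanSpace ℝ (Fin d)) (h : hatFn d δ (gridPt d δ k) x ≠ 0) :
    ‖gridPt d δ k - x‖ ≤ Real.sqrt d * δ := by
  have hcoord : ∀ i, |x i - δ * k i| ≤ δ := by
    intro i
    by_contra hcon
    push_neg at hcon
    apply h
    refine Finset.prod_eq_zero (Finset.mem_univ i) ?_
    refine max_eq_left ?_
    have h1 : (1:ℝ) ≤ |x i - δ * k i| / δ := by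
      rw [le_div_iff₀ hδ]; linarith
    have : (gridPt d δ k) i = δ * k i := rfl
    rw [this]
    linarith
  rw [EuclideanSpace.norm_eq]
  have hb : ∀ i, ‖(gridPt d δ k - x) i‖ ^ 2 ≤ δ ^ 2 := by
    intro i
    have : (gridPt d δ k - x) i = δ * k i - x i := rfl
    rw [this, Real.norm_eq_abs, abs_sub_comm]
    have := hcoord i
    have h0 := abs_nonneg (x i - δ * k i)
    nlinarith
  calc Real.sqrt (∑ i, ‖(gridPt d δ k - x) i‖ ^ 2)
      ≤ Real.sqrt (∑ _i : Fin d, δ ^ 2) :=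
        Real.sqrt_le_sqrt (Finset.sum_le_sum fun i _ => hb i)
    _ = Real.sqrt (d * δ ^ 2) := by rw [Finset.sum_const, Finset.card_univ,
        Fintype.card_fin, nsmul_eq_mul]
    _ = Real.sqrt d * δ := by
        rw [Real.sqrt_mul (by positivity), Real.sqrt_sq hδ.le]

end AuxSum

section AuxAnalysis

variable {E F : Type*} [NormedAddCommGroup E] [NormedSpace ℝ E]
  [NormedAddCommGroup F] [NormedSpace ℝ F]

lemma norm_fderiv_fderiv_eq (f : E → F) (y : E) :
    ‖fderiv ℝ (fderiv ℝ f) y‖ = ‖iteratedFDeriv ℝ 2 f y‖ := by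
  rw [show (2:ℕ) = 1 + 1 from rfl, ← norm_iteratedFDeriv_fderiv,
    iteratedFDeriv_succ_eq_comp_right, Function.comp_apply,
    LinearIsometryEquiv.norm_map, norm_iteratedFDeriv_zero]

lemma taylor_bound (f : E → F) (hf : ContDiff ℝ 2 f) (x z : E) (R B : ℝ) (hR : 0 ≤ R)
    (hz : ‖z - x‖ ≤ R) (hB : ∀ y, ‖y - x‖ ≤ R → ‖iteratedFDeriv ℝ 2 f y‖ ≤ B) :
    ‖f z - f x - fderiv ℝ f x (z - x)‖ ≤ B * R * R := by
  have hB0 : 0 ≤ B := le_trans (norm_nonneg _) (hB x (by simp [hR]))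
  set s := Metric.closedBall x R with hs
  have hxs : x ∈ s := Metric.mem_closedBall_self hR
  have hzs : z ∈ s := by rw [hs, Metric.mem_closedBall, dist_eq_norm]; exact hz
  have hconv : Convex ℝ s := convex_closedBall _ _
  have hd1 : ContDiff ℝ 1 (fderiv ℝ f) := hf.fderiv_right (by norm_num)
  have hder : ∀ y ∈ s, DifferentiableAt ℝ (fderiv ℝ f) y :=
    fun y _ => (hd1.differentiable one_ne_zero) y
  have hb2 : ∀ y ∈ s, ‖fderiv ℝ (fderiv ℝ f) y‖ ≤ B := by
    intro y hy
    rw [norm_fderiv_fderiv_eq]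
    exact hB y (by rwa [hs, Metric.mem_closedBall, dist_eq_norm] at hy)
  have step1 : ∀ y ∈ s, ‖fderiv ℝ f y - fderiv ℝ f x‖ ≤ B * R := by
    intro y hy
    calc ‖fderiv ℝ f y - fderiv ℝ f x‖ ≤ B * ‖y - x‖ :=
          hconv.norm_image_sub_le_of_norm_fderiv_le hder hb2 hxs hy
      _ ≤ B * R := by
          refine mul_le_mul_of_nonneg_left ?_ hB0
          rwa [Metric.mem_closedBall, dist_eq_norm] at hy
  have hderf : ∀ y ∈ s, DifferentiableAt ℝ f y :=
    fun y _ => (hf.differentiable (by norm_num)) y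
  calc ‖f z - f x - fderiv ℝ f x (z - x)‖ ≤ (B * R) * ‖z - x‖ :=
        hconv.norm_image_sub_le_of_norm_fderiv_le' hderf step1 hxs hzs
    _ ≤ B * R * R := mul_le_mul_of_nonneg_left hz (mul_nonneg hB0 hR)

lemma add_rpow_le (a b r : ℝ) (ha : 0 ≤ a) (hb : 0 ≤ b) (hr : 0 ≤ r) :
    (a + b) ^ r ≤ 2 ^ r * (a ^ r + b ^ r) := by
  have key : ∀ u v : ℝ, 0 ≤ u → 0 ≤ v → u ≤ v → (u + v) ^ r ≤ 2 ^ r * (u ^ r + v ^ r) := by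
    intro u v hu hv huv
    calc (u + v) ^ r ≤ (2 * v) ^ r := Real.rpow_le_rpow (by linarith) (by linarith) hr
      _ = 2 ^ r * v ^ r := Real.mul_rpow (by norm_num) hv
      _ ≤ 2 ^ r * (u ^ r + v ^ r) := by
          have h1 : 0 ≤ u ^ r := Real.rpow_nonneg hu r
          have h2 : (0:ℝ) ≤ 2 ^ r := Real.rpow_nonneg (by norm_num) r
          nlinarith
  rcases le_total a b with h | h
  · exact key a b ha hb h
  · rw [add_comm a b, add_comm (a ^ r)]; exact key b a hb ha h

end AuxAnalysis

/-- If `φ` is `C²` with `‖∇²φ(x)‖ ≤ C₀(1 + |x|^{r'})`, then there is a constant `C ≥ 0`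
depending only on `d`, `m`, `r'` and `C₀` (not on the grid) such that for every mesh size
`δ > 0` and every box subgrid of `δℤ^d` with convex hull `Box`,
`sup_{x∈Box} ‖Pφ(x) − φ(x)‖/(1 + |x|^{r'}) ≤ C δ² (1 + δ^{r'})`. -/
theorem interp_error_bound
    (d m : ℕ) (hd : 1 ≤ d) (r' C₀ : ℝ) (hr' : 0 ≤ r') (hC₀ : 0 ≤ C₀) :
    ∃ C : ℝ, 0 ≤ C ∧
      ∀ φ : EuclideanSpace ℝ (Fin d) → EuclideanSpace ℝ (Fin m),
        ContDiff ℝ 2 φ →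
        (∀ x, ‖iteratedFDeriv ℝ 2 φ x‖ ≤ C₀ * (1 + ‖x‖ ^ r')) →
        ∀ δ : ℝ, 0 < δ →
        ∀ mlo Mhi : Fin d → ℤ, (∀ i, mlo i ≤ Mhi i) →
        ∀ x : EuclideanSpace ℝ (Fin d),
          (∀ i, δ * mlo i ≤ x i ∧ x i ≤ δ * Mhi i) →
          ‖interp d δ mlo Mhi φ x - φ x‖ / (1 + ‖x‖ ^ r') ≤ C * δ ^ 2 * (1 + δ ^ r') := by
  refine ⟨C₀ * d * 2 ^ r' * (1 + Real.sqrt d ^ r'), by positivity, ?_⟩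
  intro φ hφ hbound δ hδ mlo Mhi hmM x hx
  have hproj : boxProj d δ mlo Mhi x = x := by
    ext i
    show max (δ * mlo i) (min (x i) (δ * Mhi i)) = x i
    rw [min_eq_left (hx i).2, max_eq_right (hx i).1]
  set R := Real.sqrt d * δ with hRdef
  have hR0 : 0 ≤ R := by positivity
  set L := fderiv ℝ φ x with hL
  have hps := hat_partition hδ hmM hx
  have hrep : interp d δ mlo Mhi φ x - φ x
      = ∑ k ∈ Finset.Icc mlo Mhi, hatFn d δ (gridPt d δ k) x •
          (φ (gridPt d δ k) - φ x - L (gridPt d δ k - x)) := by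
    rw [interp, hproj]
    have e : ∀ k ∈ Finset.Icc mlo Mhi,
        hatFn d δ (gridPt d δ k) x •
          (φ (gridPt d δ k) - φ x - L (gridPt d δ k - x))
        = hatFn d δ (gridPt d δ k) x • φ (gridPt d δ k)
          - hatFn d δ (gridPt d δ k) x • φ x
          - L (hatFn d δ (gridPt d δ k) x • (gridPt d δ k - x)) := by
      intro k _
      rw [smul_sub, smul_sub, map_smul]
    rw [Finset.sum_congr rfl e, Finset.sum_sub_distrib, Finset.sum_sub_distrib,
      ← Finset.sum_smul, hps, one_smul, ← map_sum, hat_weighted_vec hδ hmM hx, map_zero,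
      sub_zero]
  set B := C₀ * (1 + (‖x‖ + R) ^ r') with hB
  have hB0 : 0 ≤ B := by positivity
  have hBy : ∀ y, ‖y - x‖ ≤ R → ‖iteratedFDeriv ℝ 2 φ y‖ ≤ B := by
    intro y hy
    refine le_trans (hbound y) ?_
    have h1 : ‖y‖ ≤ ‖x‖ + R := by
      have := norm_sub_norm_le y x
      linarith
    have h2 : ‖y‖ ^ r' ≤ (‖x‖ + R) ^ r' := Real.rpow_le_rpow (norm_nonneg y) h1 hr'
    rw [hB]
    exact mul_le_mul_of_nonneg_left (by linarith) hC₀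
  have hterm : ∀ k ∈ Finset.Icc mlo Mhi,
      hatFn d δ (gridPt d δ k) x *
        ‖φ (gridPt d δ k) - φ x - L (gridPt d δ k - x)‖
      ≤ hatFn d δ (gridPt d δ k) x * (B * R * R) := by
    intro k _
    rcases eq_or_ne (hatFn d δ (gridPt d δ k) x) 0 with h0 | h0
    · rw [h0, zero_mul, zero_mul]
    · exact mul_le_mul_of_nonneg_left
        (taylor_bound φ hφ x (gridPt d δ k) R B hR0 (hat_support hδ k x h0) hBy)
        (hat_nonneg _ _ _ _)
  have hnorm : ‖interp d δ mlo Mhi φ x - φ x‖ ≤ B * R * R := by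
    rw [hrep]
    calc ‖∑ k ∈ Finset.Icc mlo Mhi, hatFn d δ (gridPt d δ k) x •
          (φ (gridPt d δ k) - φ x - L (gridPt d δ k - x))‖
        ≤ ∑ k ∈ Finset.Icc mlo Mhi, ‖hatFn d δ (gridPt d δ k) x •
          (φ (gridPt d δ k) - φ x - L (gridPt d δ k - x))‖ := norm_sum_le _ _
      _ = ∑ k ∈ Finset.Icc mlo Mhi, hatFn d δ (gridPt d δ k) x *
          ‖φ (gridPt d δ k) - φ x - L (gridPt d δ k - x)‖ := by
          refine Finset.sum_congr rfl fun k _ => ?_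
          rw [norm_smul, Real.norm_eq_abs, abs_of_nonneg (hat_nonneg _ _ _ _)]
      _ ≤ ∑ k ∈ Finset.Icc mlo Mhi, hatFn d δ (gridPt d δ k) x * (B * R * R) :=
          Finset.sum_le_sum hterm
      _ = (∑ k ∈ Finset.Icc mlo Mhi, hatFn d δ (gridPt d δ k) x) * (B * R * R) := by
          rw [← Finset.sum_mul]
      _ = B * R * R := by rw [hps, one_mul]
  have hRR : R * R = d * δ ^ 2 := by
    rw [hRdef, show Real.sqrt d * δ * (Real.sqrt d * δ)
      = Real.sqrt d * Real.sqrt d * δ ^ 2 by ring,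
      Real.mul_self_sqrt (Nat.cast_nonneg d)]
  have hRr' : R ^ r' = Real.sqrt d ^ r' * δ ^ r' :=
    Real.mul_rpow (Real.sqrt_nonneg _) hδ.le
  have ha : (0:ℝ) ≤ ‖x‖ ^ r' := Real.rpow_nonneg (norm_nonneg x) r'
  have hb : (0:ℝ) ≤ δ ^ r' := Real.rpow_nonneg hδ.le r'
  have hc : (0:ℝ) ≤ Real.sqrt d ^ r' := Real.rpow_nonneg (Real.sqrt_nonneg _) r'
  have hp1 : (1:ℝ) ≤ 2 ^ r' := Real.one_le_rpow (by norm_num) hr'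
  have hkey : 1 + (‖x‖ + R) ^ r'
      ≤ 2 ^ r' * (1 + Real.sqrt d ^ r') * ((1 + ‖x‖ ^ r') * (1 + δ ^ r')) := by
    have h1 : (‖x‖ + R) ^ r' ≤ 2 ^ r' * (‖x‖ ^ r' + Real.sqrt d ^ r' * δ ^ r') := by
      have := add_rpow_le ‖x‖ R r' (norm_nonneg x) hR0 hr'
      rwa [hRr'] at this
    nlinarith [mul_nonneg ha hb, mul_nonneg hc hb, mul_nonneg hc ha,
      mul_nonneg (mul_nonneg hc ha) hb, mul_nonneg ha hc]
  have hgoalpos : (0:ℝ) < 1 + ‖x‖ ^ r' := by positivity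
  rw [div_le_iff₀ hgoalpos]
  calc ‖interp d δ mlo Mhi φ x - φ x‖ ≤ B * R * R := hnorm
    _ = C₀ * (d * δ ^ 2) * (1 + (‖x‖ + R) ^ r') := by
        rw [mul_assoc, hRR, hB]; ring
    _ ≤ C₀ * (d * δ ^ 2) *
        (2 ^ r' * (1 + Real.sqrt d ^ r') * ((1 + ‖x‖ ^ r') * (1 + δ ^ r'))) :=
        mul_le_mul_of_nonneg_left hkey (by positivity)
    _ = C₀ * d * 2 ^ r' * (1 + Real.sqrt d ^ r') * δ ^ 2 * (1 + δ ^ r')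
        * (1 + ‖x‖ ^ r') := by ring
end
end

section
/- Let Π be a box subgrid of δℤ^d, let r' ≥ 0 and write ρ_{r'}(x) = 1 + |x|^{r'}. Then for every function φ : Π → ℝ^m and every x ∈ ℝ^d: ‖Pφ(x)‖ ≤ Pρ_{r'}(x) · sup_{z∈Π} (‖φ(z)‖/ρ_{r'}(z)), where Pρ_{r'} is the interpolation of the restriction of ρ_{r'} to Π. -/
noncomputable section

/-- With `ρ_{r'}(x) = 1 + |x|^{r'}`, for every `φ : Π → ℝ^m` and every `x ∈ ℝ^d`,
`‖Pφ(x)‖ ≤ Pρ_{r'}(x) · sup_{z∈Π} ‖φ(z)‖/ρ_{r'}(z)`. -/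
theorem interp_growth_bound
    (d m : ℕ) (hd : 1 ≤ d) (δ : ℝ) (hδ : 0 < δ)
    (mlo Mhi : Fin d → ℤ) (hne : (Finset.Icc mlo Mhi).Nonempty)
    (r' : ℝ) (hr' : 0 ≤ r')
    (φ : EuclideanSpace ℝ (Fin d) → EuclideanSpace ℝ (Fin m))
    (x : EuclideanSpace ℝ (Fin d)) :
    ‖interp d δ mlo Mhi φ x‖ ≤
      interp d δ mlo Mhi (fun y => 1 + ‖y‖ ^ r') x *
        (Finset.Icc mlo Mhi).sup' hne
          (fun k => ‖φ (gridPt d δ k)‖ / (1 + ‖gridPt d δ k‖ ^ r')) := by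
  set S := (Finset.Icc mlo Mhi).sup' hne
      (fun k => ‖φ (gridPt d δ k)‖ / (1 + ‖gridPt d δ k‖ ^ r')) with hS
  have hρ : ∀ k : Fin d → ℤ, (0:ℝ) < 1 + ‖gridPt d δ k‖ ^ r' := fun k => by
    have := Real.rpow_nonneg (norm_nonneg (gridPt d δ k)) r'
    linarith
  have hc : ∀ k : Fin d → ℤ,
      0 ≤ hatFn d δ (gridPt d δ k) (boxProj d δ mlo Mhi x) := fun k =>
    Finset.prod_nonneg fun i _ => le_max_left _ _
  calc ‖interp d δ mlo Mhi φ x‖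
      ≤ ∑ k ∈ Finset.Icc mlo Mhi,
          ‖hatFn d δ (gridPt d δ k) (boxProj d δ mlo Mhi x) • φ (gridPt d δ k)‖ :=
        norm_sum_le _ _
    _ ≤ ∑ k ∈ Finset.Icc mlo Mhi,
          hatFn d δ (gridPt d δ k) (boxProj d δ mlo Mhi x) *
            ((1 + ‖gridPt d δ k‖ ^ r') * S) := by
        refine Finset.sum_le_sum fun k hk => ?_
        rw [norm_smul, Real.norm_eq_abs, abs_of_nonneg (hc k)]
        refine mul_le_mul_of_nonneg_left ?_ (hc k)
        have hle : ‖φ (gridPt d δ k)‖ / (1 + ‖gridPt d δ k‖ ^ r') ≤ S := by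
          rw [hS]
          exact Finset.le_sup' (fun k => ‖φ (gridPt d δ k)‖ / (1 + ‖gridPt d δ k‖ ^ r')) hk
        calc ‖φ (gridPt d δ k)‖
            = (1 + ‖gridPt d δ k‖ ^ r') *
                (‖φ (gridPt d δ k)‖ / (1 + ‖gridPt d δ k‖ ^ r')) := by
              field_simp
          _ ≤ (1 + ‖gridPt d δ k‖ ^ r') * S :=
              mul_le_mul_of_nonneg_left hle (hρ k).le
    _ = interp d δ mlo Mhi (fun y => 1 + ‖y‖ ^ r') x * S := by
        rw [interp, Finset.sum_mul]
        congr 1; ext k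
        rw [smul_eq_mul]; ring
end
end

section
/- Let r' ≥ 2 and write ρ_{r'}(x) = 1 + |x|^{r'}. There exists a constant C ≥ 0 depending only on d and r' such that for every mesh size δ > 0 and every box subgrid Π of δℤ^d whose convex hull Box contains 0: sup_{x∈ℝ^d} Pρ_{r'}(x)/ρ_{r'}(x) ≤ 1 + C·δ²·(1 + δ^{r'}), where Pρ_{r'} is the interpolation of the restriction of ρ_{r'} to Π. -/
noncomputable section

/-- Tangent line lower bound for `t ^ r`, `r ≥ 1` (Bernoulli). -/
lemma tangent_lower {r x y : ℝ} (hr : 1 ≤ r) (hx : 0 < x) (hy : 0 ≤ y) :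
    x ^ r + r * x ^ (r - 1) * (y - x) ≤ y ^ r := by
  have hs : -1 ≤ y / x - 1 := by
    have : 0 ≤ y / x := div_nonneg hy hx.le
    linarith
  have hB := one_add_mul_self_le_rpow_one_add hs hr
  rw [show 1 + (y / x - 1) = y / x by ring] at hB
  have hxr : (0:ℝ) < x ^ r := Real.rpow_pos_of_pos hx r
  have hB2 := mul_le_mul_of_nonneg_left hB hxr.le
  have hdiv : x ^ r * (y / x) ^ r = y ^ r := by
    rw [Real.div_rpow hy hx.le]
    field_simp
  have hpow : x ^ (r-1) = x ^ r / x := Real.rpow_sub_one hx.ne' r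
  calc x ^ r + r * x ^ (r - 1) * (y - x)
      = x ^ r * (1 + r * (y / x - 1)) := by rw [hpow]; field_simp
    _ ≤ x ^ r * (y / x) ^ r := hB2
    _ = y ^ r := hdiv

/-- Tangent line upper bound for `t ^ r`, `0 ≤ r ≤ 1` (Bernoulli). -/
lemma tangent_upper {r x y : ℝ} (hr0 : 0 ≤ r) (hr1 : r ≤ 1) (hx : 0 < x) (hy : 0 ≤ y) :
    y ^ r ≤ x ^ r + r * x ^ (r - 1) * (y - x) := by
  have hs : -1 ≤ y / x - 1 := by
    have : 0 ≤ y / x := div_nonneg hy hx.le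
    linarith
  have hB := rpow_one_add_le_one_add_mul_self hs hr0 hr1
  rw [show 1 + (y / x - 1) = y / x by ring] at hB
  have hxr : (0:ℝ) < x ^ r := Real.rpow_pos_of_pos hx r
  have hB2 := mul_le_mul_of_nonneg_left hB hxr.le
  have hdiv : x ^ r * (y / x) ^ r = y ^ r := by
    rw [Real.div_rpow hy hx.le]
    field_simp
  have hpow : x ^ (r-1) = x ^ r / x := Real.rpow_sub_one hx.ne' r
  calc y ^ r = x ^ r * (y / x) ^ r := hdiv.symm
    _ ≤ x ^ r * (1 + r * (y / x - 1)) := hB2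
    _ = x ^ r + r * x ^ (r - 1) * (y - x) := by rw [hpow]; field_simp

lemma taylor2_upper {q u v F : ℝ} (hq : 1 ≤ q) (hu : 0 < u) (hv : 0 < v)
    (hlo : u ≤ v → v ^ (q-1) - u ^ (q-1) ≤ F * (v - u))
    (hhi : v ≤ u → u ^ (q-1) - v ^ (q-1) ≤ F * (u - v)) :
    v ^ q - u ^ q - q * u ^ (q-1) * (v - u) ≤ q * F * (v - u) ^ 2 := by
  have h1 := tangent_lower hq hv hu.le
  rcases le_total u v with h | h
  · have h2 := mul_le_mul_of_nonneg_left (hlo h)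
      (mul_nonneg (by linarith : (0:ℝ) ≤ q) (by linarith : (0:ℝ) ≤ v - u))
    nlinarith [h1, h2]
  · have h2 := mul_le_mul_of_nonneg_left (hhi h)
      (mul_nonneg (by linarith : (0:ℝ) ≤ q) (by linarith : (0:ℝ) ≤ u - v))
    nlinarith [h1, h2]

lemma der_diff_le_of_le_two {q u v : ℝ} (hq : 1 ≤ q) (hq2 : q ≤ 2) (hu : 0 < u) (huv : u ≤ v) :
    v ^ (q-1) - u ^ (q-1) ≤ (q-1) * u ^ (q-2) * (v - u) := by
  have h := tangent_upper (r := q-1) (x := u) (y := v) (by linarith) (by linarith) hu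
    (le_trans hu.le huv)
  rw [show q - 1 - 1 = q - 2 by ring] at h
  linarith

lemma der_diff_le_of_two_le {q u v : ℝ} (hq2 : 2 ≤ q) (hu : 0 < u) (huv : u ≤ v) :
    v ^ (q-1) - u ^ (q-1) ≤ (q-1) * v ^ (q-2) * (v - u) := by
  have hv : 0 < v := lt_of_lt_of_le hu huv
  have h := tangent_lower (r := q-1) (x := v) (y := u) (by linarith) hv hu.le
  rw [show q - 1 - 1 = q - 2 by ring] at h
  linarith

lemma key_case1 {q x A C S : ℝ} (hq : 1 ≤ q) (hx0 : 0 ≤ x) (hxS : x ≤ S)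
    (hC : 0 ≤ C) (hA : 0 ≤ A) (hAS : A ≤ S) (hSpos : 0 < S) (hS9C : S ≤ 9*C)
    (h2B : -(5*C) ≤ x - A) :
    x ^ q ≤ A ^ q + q * A ^ (q-1) * (x - A) + 36 * q^2 * C * S ^ (q-1) := by
  have hq0 : (0:ℝ) < q := by linarith
  have hq10 : (0:ℝ) ≤ q - 1 := by linarith
  have hSpow_nonneg : 0 ≤ S ^ (q-1) := Real.rpow_nonneg hSpos.le _
  have hApow_le : A ^ (q-1) ≤ S ^ (q-1) := Real.rpow_le_rpow hA hAS hq10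
  have hApow_nonneg : 0 ≤ A ^ (q-1) := Real.rpow_nonneg hA _
  have hCS : 0 ≤ C * S ^ (q-1) := mul_nonneg hC hSpow_nonneg
  have h1 : x ^ q ≤ 9 * C * S ^ (q-1) := by
    have e1 : S ^ q = S ^ (q-1) * S := by
      rw [← Real.rpow_add_one hSpos.ne' (q-1)]; congr 1; ring
    calc x ^ q ≤ S ^ q := Real.rpow_le_rpow hx0 hxS hq0.le
      _ = S ^ (q-1) * S := e1
      _ ≤ S ^ (q-1) * (9 * C) := mul_le_mul_of_nonneg_left hS9C hSpow_nonneg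
      _ = 9 * C * S ^ (q-1) := by ring
  have t1 : q * A^(q-1) * (-(5*C)) ≤ q * A^(q-1) * (x - A) :=
    mul_le_mul_of_nonneg_left h2B (mul_nonneg hq0.le hApow_nonneg)
  have t2 : q * (5*C) * A^(q-1) ≤ q * (5*C) * S^(q-1) :=
    mul_le_mul_of_nonneg_left hApow_le (by positivity)
  have hAq : 0 ≤ A ^ q := Real.rpow_nonneg hA _
  have hslack : 0 ≤ (36*q^2 - 5*q - 9) * (C * S^(q-1)) := by
    apply mul_nonneg _ hCS
    nlinarith
  nlinarith [h1, t1, t2, hAq, hslack]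

lemma key_case2a {q x A C S : ℝ} (hq : 1 ≤ q) (hq2 : q ≤ 2) (hApos : 0 < A)
    (hxq : A/4 ≤ x) (hxA2 : (x - A)^2 ≤ 9 * (A * C)) (hC : 0 ≤ C)
    (hAS : A ≤ S) (hS0 : 0 ≤ S) :
    x ^ q ≤ A ^ q + q * A ^ (q-1) * (x - A) + 36 * q^2 * C * S ^ (q-1) := by
  have hq0 : (0:ℝ) < q := by linarith
  have hq10 : (0:ℝ) ≤ q - 1 := by linarith
  have hxpos : 0 < x := lt_of_lt_of_le (by linarith) hxq
  have hA2pow : 0 ≤ A ^ (q-2) := Real.rpow_nonneg hApos.le _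
  have hApow_le : A ^ (q-1) ≤ S ^ (q-1) := Real.rpow_le_rpow hApos.le hAS hq10
  have hApow_nonneg : 0 ≤ A ^ (q-1) := Real.rpow_nonneg hApos.le _
  have hA4 : (A/4) ^ (q-2) ≤ 4 * A ^ (q-2) := by
    rw [div_eq_mul_inv, Real.mul_rpow hApos.le (by norm_num)]
    have h1 : ((4:ℝ)⁻¹) ^ (q-2) = 4 ^ ((-1) * (q-2)) := by
      rw [← Real.rpow_neg_one, ← Real.rpow_mul (by norm_num : (0:ℝ) ≤ 4)]
    have h2 : (4:ℝ) ^ ((-1)*(q-2)) ≤ 4 ^ (1:ℝ) :=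
      Real.rpow_le_rpow_of_exponent_le (by norm_num) (by linarith)
    rw [Real.rpow_one] at h2
    rw [h1]
    have h3 := mul_le_mul_of_nonneg_left h2 hA2pow
    linarith
  set F : ℝ := (q-1) * (4 * A ^ (q-2)) with hF
  have hlo : A ≤ x → x ^ (q-1) - A ^ (q-1) ≤ F * (x - A) := by
    intro h
    have hd := der_diff_le_of_le_two hq hq2 hApos h
    have hc1 : (q-1) * A ^ (q-2) ≤ F := by
      rw [hF]; nlinarith [hA2pow]
    have h4 := mul_le_mul_of_nonneg_right hc1 (by linarith : (0:ℝ) ≤ x - A)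
    linarith
  have hhi : x ≤ A → A ^ (q-1) - x ^ (q-1) ≤ F * (A - x) := by
    intro h
    have hd := der_diff_le_of_le_two hq hq2 hxpos h
    have hxpow : x ^ (q-2) ≤ (A/4) ^ (q-2) :=
      Real.rpow_le_rpow_of_nonpos (by positivity) hxq (by linarith)
    have hc1 : (q-1) * x ^ (q-2) ≤ F := by
      rw [hF]
      have h5 : x ^ (q-2) ≤ 4 * A ^ (q-2) := le_trans hxpow hA4
      nlinarith [Real.rpow_nonneg hxpos.le (q-2)]
    have h4 := mul_le_mul_of_nonneg_right hc1 (by linarith : (0:ℝ) ≤ A - x)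
    linarith
  have hrem := taylor2_upper (u := A) (v := x) (F := F) hq hApos hxpos hlo hhi
  have hAq1 : A ^ (q-2) * A = A ^ (q-1) := by
    rw [← Real.rpow_add_one hApos.ne' (q-2)]; congr 1; ring
  have hfin : q * F * (x - A)^2 ≤ 36 * q^2 * C * S ^ (q-1) := by
    have e1 : q * F * (x-A)^2 ≤ q * F * (9 * (A * C)) := by
      apply mul_le_mul_of_nonneg_left hxA2
      apply mul_nonneg hq0.le
      rw [hF]; positivity
    have e2 : q * F * (9 * (A * C)) = 36 * (q * (q-1)) * C * (A ^ (q-2) * A) := by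
      rw [hF]; ring
    rw [e2, hAq1] at e1
    have b1 : (q * (q-1)) * (C * A ^ (q-1)) ≤ (q * q) * (C * S ^ (q-1)) := by
      apply mul_le_mul (by nlinarith) (mul_le_mul_of_nonneg_left hApow_le hC)
        (mul_nonneg hC hApow_nonneg) (by positivity)
    nlinarith [e1, b1]
  linarith [hrem, hfin]

lemma key_case2b {q x A C S : ℝ} (hq2 : 2 ≤ q) (hApos : 0 < A) (hxpos : 0 < x)
    (hxS : x ≤ S) (hAS : A ≤ S) (hC : 0 ≤ C) (hxA2 : (x - A)^2 ≤ 9 * (A * C)) :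
    x ^ q ≤ A ^ q + q * A ^ (q-1) * (x - A) + 36 * q^2 * C * S ^ (q-1) := by
  have hq : (1:ℝ) ≤ q := by linarith
  have hq0 : (0:ℝ) < q := by linarith
  have hq10 : (0:ℝ) ≤ q - 1 := by linarith
  have hq20 : (0:ℝ) ≤ q - 2 := by linarith
  have hSpos : 0 < S := lt_of_lt_of_le hApos hAS
  have hS2pow : 0 ≤ S ^ (q-2) := Real.rpow_nonneg hSpos.le _
  set F : ℝ := (q-1) * S ^ (q-2) with hF
  have hlo : A ≤ x → x ^ (q-1) - A ^ (q-1) ≤ F * (x - A) := by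
    intro h
    have hd := der_diff_le_of_two_le hq2 hApos h
    have hxpow : x ^ (q-2) ≤ S ^ (q-2) := Real.rpow_le_rpow hxpos.le hxS hq20
    have hc1 : (q-1) * x ^ (q-2) ≤ F := by
      rw [hF]; exact mul_le_mul_of_nonneg_left hxpow hq10
    have h4 := mul_le_mul_of_nonneg_right hc1 (by linarith : (0:ℝ) ≤ x - A)
    linarith
  have hhi : x ≤ A → A ^ (q-1) - x ^ (q-1) ≤ F * (A - x) := by
    intro h
    have hd := der_diff_le_of_two_le hq2 hxpos h
    have hApow2 : A ^ (q-2) ≤ S ^ (q-2) := Real.rpow_le_rpow hApos.le hAS hq20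
    have hc1 : (q-1) * A ^ (q-2) ≤ F := by
      rw [hF]; exact mul_le_mul_of_nonneg_left hApow2 hq10
    have h4 := mul_le_mul_of_nonneg_right hc1 (by linarith : (0:ℝ) ≤ A - x)
    linarith
  have hrem := taylor2_upper (u := A) (v := x) (F := F) hq hApos hxpos hlo hhi
  have hSq1 : S ^ (q-2) * S = S ^ (q-1) := by
    rw [← Real.rpow_add_one hSpos.ne' (q-2)]; congr 1; ring
  have hfin : q * F * (x - A)^2 ≤ 36 * q^2 * C * S ^ (q-1) := by
    have e1 : q * F * (x-A)^2 ≤ q * F * (9 * (A * C)) := by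
      apply mul_le_mul_of_nonneg_left hxA2
      apply mul_nonneg hq0.le
      rw [hF]; positivity
    have e2 : q * F * (9 * (A*C)) = 9 * (q * (q-1)) * C * (S ^ (q-2) * A) := by
      rw [hF]; ring
    have e3 : S ^ (q-2) * A ≤ S ^ (q-1) := by
      rw [← hSq1]
      exact mul_le_mul_of_nonneg_left hAS hS2pow
    have b1 : (q * (q-1)) * (C * (S ^ (q-2) * A)) ≤ (4 * (q*q)) * (C * S ^ (q-1)) := by
      apply mul_le_mul (by nlinarith) (mul_le_mul_of_nonneg_left e3 hC)
        (mul_nonneg hC (mul_nonneg hS2pow hApos.le)) (by positivity)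
    nlinarith [e1, b1]
  linarith [hrem, hfin]

/-- The key scalar inequality: second-order expansion of `(A + 2B + C)^q` around `A`. -/
lemma key_scalar {q A B C : ℝ} (hq : 1 ≤ q) (hA : 0 ≤ A) (hC : 0 ≤ C) (hB : B ^ 2 ≤ A * C) :
    (A + 2*B + C) ^ q ≤
      A ^ q + q * A ^ (q-1) * (2*B + C)
        + 36 * q^2 * C * ((Real.sqrt A + Real.sqrt C) ^ 2) ^ (q-1) := by
  set a := Real.sqrt A with ha
  set c := Real.sqrt C with hc
  have ha0 : 0 ≤ a := Real.sqrt_nonneg _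
  have hc0 : 0 ≤ c := Real.sqrt_nonneg _
  have hac0 : 0 ≤ a * c := mul_nonneg ha0 hc0
  have haA : a ^ 2 = A := Real.sq_sqrt hA
  have hcC : c ^ 2 = C := Real.sq_sqrt hC
  have hq0 : (0:ℝ) < q := by linarith
  have hBac : |B| ≤ a * c := by
    have h1 : B ^ 2 ≤ (a*c) ^ 2 := by rw [mul_pow, haA, hcC]; exact hB
    calc |B| = Real.sqrt (B^2) := (Real.sqrt_sq_eq_abs B).symm
      _ ≤ Real.sqrt ((a*c)^2) := Real.sqrt_le_sqrt h1
      _ = a * c := Real.sqrt_sq hac0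
  have hBl : -(a*c) ≤ B := (abs_le.mp hBac).1
  have hBu : B ≤ a*c := (abs_le.mp hBac).2
  set S : ℝ := (a + c) ^ 2 with hS
  set x : ℝ := A + 2*B + C with hxdef
  have eS : S = A + 2*(a*c) + C := by rw [hS, ← haA, ← hcC]; ring
  have eD : (a - c)^2 = A - 2*(a*c) + C := by rw [← haA, ← hcC]; ring
  have hx0 : 0 ≤ x := by linarith [sq_nonneg (a-c), eD, hBl]
  have hxS : x ≤ S := by linarith
  have hS0 : 0 ≤ S := sq_nonneg _
  have hAS : A ≤ S := by linarith
  have hfix : 2*B + C = x - A := by rw [hxdef]; ring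
  rw [hfix]
  by_cases hac : a + c = 0
  · have haz : a = 0 := by linarith
    have hcz : c = 0 := by linarith
    have hA0 : A = 0 := by rw [← haA, haz]; ring
    have hC0 : C = 0 := by rw [← hcC, hcz]; ring
    rw [haz, zero_mul] at hBac
    have hB0 : B = 0 := abs_eq_zero.mp (le_antisymm hBac (abs_nonneg B))
    have hx' : x = 0 := by rw [hxdef, hA0, hB0, hC0]; ring
    rw [hx', hA0, hC0, Real.zero_rpow hq0.ne']
    simp [Real.zero_rpow hq0.ne']
  · have hSpos : 0 < S := by
      have h1 : 0 < a + c := lt_of_le_of_ne (by linarith) (Ne.symm hac)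
      positivity
    by_cases hAC : A ≤ 4 * C
    · have hc2 : a ≤ 2 * c := by
        have h1 : A ≤ (2*c)^2 := by rw [mul_pow]; linarith [hcC]
        calc a = Real.sqrt A := ha
          _ ≤ Real.sqrt ((2*c)^2) := Real.sqrt_le_sqrt h1
          _ = 2 * c := Real.sqrt_sq (by linarith)
      have hac2C : a * c ≤ 2 * C := by
        have h2 := mul_le_mul_of_nonneg_right hc2 hc0
        have e2 : c * c = C := by rw [← hcC]; ring
        linarith [h2, e2]
      have hS9C : S ≤ 9 * C := by linarith
      have h2B : -(5*C) ≤ x - A := by linarith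
      exact key_case1 hq hx0 hxS hC hA hAS hSpos hS9C h2B
    · have h4C : 4 * C < A := lt_of_not_ge hAC
      have hApos : 0 < A := by linarith
      have hca : c ≤ a / 2 := by
        have h1 : C ≤ (a/2)^2 := by rw [div_pow]; rw [haA]; norm_num; linarith
        calc c = Real.sqrt C := hc
          _ ≤ Real.sqrt ((a/2)^2) := Real.sqrt_le_sqrt h1
          _ = a / 2 := Real.sqrt_sq (by linarith)
      have hapos : 0 < a := Real.sqrt_pos.mpr hApos
      have hacC : C ≤ a * c := by
        have h2 := mul_le_mul_of_nonneg_right hca hc0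
        have e2 : c * c = C := by rw [← hcC]; ring
        linarith [h2, e2, hac0]
      have hxA : |x - A| ≤ 3 * (a * c) := by
        rw [abs_le]
        constructor
        · linarith [hBl, hC, hac0]
        · linarith [hBu, hacC]
      have hxA2 : (x - A) ^ 2 ≤ 9 * (A * C) := by
        have h1 := sq_le_sq' (abs_le.mp hxA).1 (abs_le.mp hxA).2
        have h2 : (3*(a*c))^2 = 9 * (A*C) := by rw [← haA, ← hcC]; ring
        linarith
      have hxq : A / 4 ≤ x := by
        have h1 : (0:ℝ) ≤ a/2 - c := by linarith
        have h2 : (0:ℝ) ≤ 3*a/2 - c := by linarith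
        have h3 := mul_nonneg h1 h2
        have e2 : c ^ 2 = C := hcC
        nlinarith [h3, haA, e2, hBl]
      have hxpos : 0 < x := by linarith
      rcases le_total q 2 with hq2 | hq2
      · exact key_case2a hq hq2 hApos hxq hxA2 hC hAS hS0
      · exact key_case2b hq2 hApos hxpos hxS hAS hC hxA2

/-- Outside the two neighbours of `y`, the 1-d hat function vanishes. -/
lemma hat1d_zero {δ y : ℝ} (hδ : 0 < δ) {j : ℤ} (h : δ ≤ |y - δ * j|) :
    max 0 (1 - |y - δ * j| / δ) = 0 := by
  apply max_eq_left
  rw [sub_nonpos]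
  exact (one_le_div hδ).mpr h

/-- Reduction of the 1-d hat sum to the two neighbours of `y`. -/
lemma oneD_pair {δ : ℝ} (hδ : 0 < δ) {m M : ℤ} (hmM : m < M) {y : ℝ}
    (h1 : δ * m ≤ y) (h2 : y ≤ δ * M) (g : ℤ → ℝ) :
    ∃ n : ℤ, m ≤ n ∧ n + 1 ≤ M ∧ δ * n ≤ y ∧ y ≤ δ * (n + 1) ∧
      ∑ j ∈ Finset.Icc m M, max 0 (1 - |y - δ * j| / δ) * g j
        = (1 - (y - δ * n) / δ) * g n + ((y - δ * n) / δ) * g (n + 1) := by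
  set n : ℤ := min (M - 1) ⌊y / δ⌋ with hn
  have hfl : (m : ℝ) ≤ y / δ := by rw [le_div_iff₀ hδ]; linarith
  have hmfl : m ≤ ⌊y / δ⌋ := Int.le_floor.mpr hfl
  have hn1 : m ≤ n := le_min (by omega) hmfl
  have hn2 : n + 1 ≤ M := by omega
  have hn3 : δ * n ≤ y := by
    have h3 : (n : ℝ) ≤ ⌊y / δ⌋ := by exact_mod_cast min_le_right (M-1) ⌊y / δ⌋
    have h4 : (⌊y / δ⌋ : ℝ) ≤ y / δ := Int.floor_le _
    calc δ * n ≤ δ * (y / δ) := by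
          apply mul_le_mul_of_nonneg_left _ hδ.le
          linarith
      _ = y := by field_simp
  have hn4 : y ≤ δ * (n + 1) := by
    rcases le_total (M - 1) ⌊y / δ⌋ with h | h
    · have : n = M - 1 := by omega
      rw [this]
      push_cast
      have : δ * (M - 1 + 1) = δ * M := by ring
      rw [this]; exact h2
    · have hne : n = ⌊y / δ⌋ := by omega
      have h4 : y / δ < ⌊y / δ⌋ + 1 := Int.lt_floor_add_one _
      have h5 : y / δ < (n : ℝ) + 1 := by rw [hne]; exact_mod_cast h4
      have := mul_lt_mul_of_pos_left h5 hδ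
      calc y = δ * (y / δ) := by field_simp
        _ ≤ δ * ((n : ℝ) + 1) := by nlinarith
      -- fallthrough
  refine ⟨n, hn1, hn2, hn3, hn4, ?_⟩
  have hsub : ({n, n + 1} : Finset ℤ) ⊆ Finset.Icc m M := by
    intro j hj
    simp only [Finset.mem_insert, Finset.mem_singleton] at hj
    rw [Finset.mem_Icc]
    rcases hj with rfl | rfl <;> omega
  have hzero : ∀ j ∈ Finset.Icc m M, j ∉ ({n, n + 1} : Finset ℤ) →
      max 0 (1 - |y - δ * j| / δ) * g j = 0 := by
    intro j hj hj'
    simp only [Finset.mem_insert, Finset.mem_singleton, not_or] at hj'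
    rw [Finset.mem_Icc] at hj
    have hd : δ ≤ |y - δ * j| := by
      rcases lt_or_gt_of_ne hj'.1 with h | h
      · -- j < n, so j ≤ n - 1 : y - δ j ≥ δ
        have hj1 : (j : ℝ) + 1 ≤ n := by exact_mod_cast h
        have : δ * (j + 1) ≤ δ * n := mul_le_mul_of_nonneg_left hj1 hδ.le
        have h6 : δ ≤ y - δ * j := by
          have : δ * j + δ ≤ δ * n := by linarith [this, mul_add δ (j:ℝ) 1]
          linarith
        calc δ ≤ y - δ * j := h6
          _ ≤ |y - δ * j| := le_abs_self _
      · -- j > n + 1, so j ≥ n + 2 : δ j - y ≥ δ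
        have hj1 : (n : ℝ) + 2 ≤ j := by
          have : n + 2 ≤ j := by omega
          exact_mod_cast this
        have h6 : δ ≤ δ * j - y := by
          have h7 : δ * ((n : ℝ) + 2) ≤ δ * j := mul_le_mul_of_nonneg_left hj1 hδ.le
          have h8 : δ * ((n : ℝ) + 1) + δ = δ * ((n:ℝ) + 2) := by ring
          linarith
        calc δ ≤ δ * j - y := h6
          _ = -(y - δ * j) := by ring
          _ ≤ |y - δ * j| := neg_le_abs _
    rw [hat1d_zero hδ hd, zero_mul]
  rw [← Finset.sum_subset hsub hzero]
  rw [Finset.sum_pair (by omega : n ≠ n + 1)]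
  have hv1 : |y - δ * (n : ℝ)| = y - δ * n := abs_of_nonneg (by linarith)
  have hv2 : |y - δ * ((n : ℤ) + 1 : ℤ)| = δ * ((n : ℝ) + 1) - y := by
    push_cast
    rw [abs_of_nonpos (by linarith)]
    ring
  have hm1 : max 0 (1 - |y - δ * (n:ℝ)| / δ) = 1 - (y - δ * n) / δ := by
    rw [hv1]
    apply max_eq_right
    rw [sub_nonneg, div_le_one hδ]
    have : δ * ((n:ℝ) + 1) = δ * n + δ := by ring
    linarith
  have hm2 : max 0 (1 - |y - δ * ((n : ℤ) + 1 : ℤ)| / δ) = (y - δ * n) / δ := by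
    rw [hv2]
    rw [show 1 - (δ * ((n:ℝ) + 1) - y) / δ = (y - δ * n) / δ by field_simp; ring]
    apply max_eq_right
    apply div_nonneg _ hδ.le
    linarith
  push_cast at hm1 hm2 ⊢
  rw [hm1, hm2]

/-- The 1-d hat functions sum to one on the box. -/
lemma oneD_sum {δ : ℝ} (hδ : 0 < δ) {m M : ℤ} (hmM : m ≤ M) {y : ℝ}
    (h1 : δ * m ≤ y) (h2 : y ≤ δ * M) :
    ∑ j ∈ Finset.Icc m M, max 0 (1 - |y - δ * j| / δ) = 1 := by
  have : ∑ j ∈ Finset.Icc m M, max 0 (1 - |y - δ * j| / δ)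
      = ∑ j ∈ Finset.Icc m M, max 0 (1 - |y - δ * j| / δ) * (fun _ : ℤ => (1:ℝ)) j := by
    simp
  rw [this]
  rcases eq_or_lt_of_le hmM with rfl | hlt
  · have hy : y = δ * m := le_antisymm h2 h1
    rw [Finset.Icc_self, Finset.sum_singleton, hy]
    simp
  · obtain ⟨n, -, -, hn3, hn4, he⟩ := oneD_pair hδ hlt h1 h2 (fun _ => (1:ℝ))
    rw [he]
    field_simp
    ring

/-- The 1-d hat interpolation reproduces linear functions on the box. -/
lemma oneD_lin {δ : ℝ} (hδ : 0 < δ) {m M : ℤ} (hmM : m ≤ M) {y : ℝ}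
    (h1 : δ * m ≤ y) (h2 : y ≤ δ * M) :
    ∑ j ∈ Finset.Icc m M, max 0 (1 - |y - δ * j| / δ) * (δ * j) = y := by
  rcases eq_or_lt_of_le hmM with rfl | hlt
  · have hy : y = δ * m := le_antisymm h2 h1
    rw [Finset.Icc_self, Finset.sum_singleton, hy]
    simp
  · obtain ⟨n, -, -, hn3, hn4, he⟩ := oneD_pair hδ hlt h1 h2 (fun j => δ * j)
    rw [he]
    push_cast
    field_simp
    ring

/-- Tensorisation: a sum over the box grid of a product factorises. -/
lemma sum_Icc_prod {d : ℕ} (mlo Mhi : Fin d → ℤ) (F : Fin d → ℤ → ℝ) :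
    ∑ k ∈ Finset.Icc mlo Mhi, ∏ i, F i (k i)
      = ∏ i, ∑ j ∈ Finset.Icc (mlo i) (Mhi i), F i j := by
  rw [Pi.Icc_eq, ← Finset.prod_univ_sum]

lemma clamp_sq_le {lo hi t : ℝ} (hlo : lo ≤ 0) (hhi : 0 ≤ hi) :
    (max lo (min t hi))^2 ≤ t^2 := by
  rcases le_total t lo with h | h
  · rw [min_eq_left (le_trans h (le_trans hlo hhi)), max_eq_left h]
    nlinarith
  · rcases le_total t hi with h2 | h2
    · rw [min_eq_left h2, max_eq_right h]
    · rw [min_eq_right h2, max_eq_right (le_trans hlo hhi)]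
      nlinarith

/-- t^(r-2) ≤ 1 + t^r for t ≥ 0, r ≥ 2. -/
lemma rpow_sub_two_le {t r : ℝ} (ht : 0 ≤ t) (hr : 2 ≤ r) : t ^ (r - 2) ≤ 1 + t ^ r := by
  rcases le_total t 1 with h | h
  · have := Real.rpow_le_one ht h (by linarith : (0:ℝ) ≤ r - 2)
    have := Real.rpow_nonneg ht r
    linarith
  · have := Real.rpow_le_rpow_of_exponent_le h (by linarith : r - 2 ≤ r)
    linarith

/-- (x+y)^s ≤ 2^s (x^s + y^s) for x,y ≥ 0, s ≥ 0. -/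
lemma add_rpow_le_two2 {x y s : ℝ} (hx : 0 ≤ x) (hy : 0 ≤ y) (hs : 0 ≤ s) :
    (x + y) ^ s ≤ 2 ^ s * (x ^ s + y ^ s) := by
  have h2 : (0:ℝ) ≤ 2 ^ s := Real.rpow_nonneg (by norm_num) _
  rcases le_total x y with h | h
  · calc (x + y)^s ≤ (2*y)^s := Real.rpow_le_rpow (by linarith) (by linarith) hs
      _ = 2^s * y^s := Real.mul_rpow (by norm_num) hy
      _ ≤ 2^s * (x^s + y^s) := by
          have := Real.rpow_nonneg hx s
          nlinarith
  · calc (x + y)^s ≤ (2*x)^s := Real.rpow_le_rpow (by linarith) (by linarith) hs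
      _ = 2^s * x^s := Real.mul_rpow (by norm_num) hx
      _ ≤ 2^s * (x^s + y^s) := by
          have := Real.rpow_nonneg hy s
          nlinarith


/-- Partition of unity for the hat functions on the box. -/
lemma hatSum_one {d : ℕ} {δ : ℝ} (hδ : 0 < δ) {mlo Mhi : Fin d → ℤ}
    (hmM : ∀ i, mlo i ≤ Mhi i) (p : Fin d → ℝ)
    (hmem : ∀ i, δ * mlo i ≤ p i ∧ p i ≤ δ * Mhi i) :
    ∑ k ∈ Finset.Icc mlo Mhi, (∏ i, max 0 (1 - |p i - δ * k i| / δ)) = 1 := by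
  rw [sum_Icc_prod mlo Mhi (fun i j => max 0 (1 - |p i - δ * j| / δ))]
  apply Finset.prod_eq_one
  intro i _
  exact oneD_sum hδ (hmM i) (hmem i).1 (hmem i).2

/-- Linear exactness of the hat interpolation, coordinatewise. -/
lemma hatSum_lin {d : ℕ} {δ : ℝ} (hδ : 0 < δ) {mlo Mhi : Fin d → ℤ}
    (hmM : ∀ i, mlo i ≤ Mhi i) (p : Fin d → ℝ)
    (hmem : ∀ i, δ * mlo i ≤ p i ∧ p i ≤ δ * Mhi i) (i₀ : Fin d) :
    ∑ k ∈ Finset.Icc mlo Mhi, (∏ i, max 0 (1 - |p i - δ * k i| / δ)) * (δ * k i₀)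
      = p i₀ := by
  set w : Fin d → ℤ → ℝ := fun i j => max 0 (1 - |p i - δ * j| / δ) with hw
  set F : Fin d → ℤ → ℝ := fun i j => if i = i₀ then w i j * (δ * j) else w i j with hF
  have hFk : ∀ k : Fin d → ℤ, (∏ i, w i (k i)) * (δ * k i₀) = ∏ i, F i (k i) := by
    intro k
    have e1 : ∏ i, w i (k i)
        = w i₀ (k i₀) * ∏ i ∈ Finset.univ.erase i₀, w i (k i) :=
      (Finset.mul_prod_erase _ _ (Finset.mem_univ i₀)).symm
    have e2 : ∏ i, F i (k i)
        = F i₀ (k i₀) * ∏ i ∈ Finset.univ.erase i₀, F i (k i) :=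
      (Finset.mul_prod_erase _ _ (Finset.mem_univ i₀)).symm
    have e3 : ∏ i ∈ Finset.univ.erase i₀, F i (k i)
        = ∏ i ∈ Finset.univ.erase i₀, w i (k i) := by
      apply Finset.prod_congr rfl
      intro i hi
      simp only [hF, if_neg (Finset.mem_erase.mp hi).1]
    have e4 : F i₀ (k i₀) = w i₀ (k i₀) * (δ * k i₀) := by simp only [hF, if_pos]
    rw [e1, e2, e3, e4]
    ring
  rw [Finset.sum_congr rfl (fun k _ => hFk k), sum_Icc_prod mlo Mhi F]
  rw [← Finset.mul_prod_erase _ _ (Finset.mem_univ i₀)]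
  have e5 : ∑ j ∈ Finset.Icc (mlo i₀) (Mhi i₀), F i₀ j = p i₀ := by
    simp only [hF, if_pos]
    exact oneD_lin hδ (hmM i₀) (hmem i₀).1 (hmem i₀).2
  have e6 : ∏ i ∈ Finset.univ.erase i₀, (∑ j ∈ Finset.Icc (mlo i) (Mhi i), F i j) = 1 := by
    apply Finset.prod_eq_one
    intro i hi
    have h7 : ∀ j, F i j = w i j := by
      intro j; simp only [hF, if_neg (Finset.mem_erase.mp hi).1]
    rw [Finset.sum_congr rfl (fun j _ => h7 j)]
    exact oneD_sum hδ (hmM i) (hmem i).1 (hmem i).2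
  rw [e5, e6, mul_one]

/-- The per-gridpoint key bound, weighted by the nonnegative hat value. -/
lemma weighted_key {q ψv A B C dd T : ℝ} (hq : 1 ≤ q) (hψ : 0 ≤ ψv) (hA : 0 ≤ A)
    (hC : 0 ≤ C) (hCS : B^2 ≤ A*C) (hdd : 0 ≤ dd) (hT : 0 ≤ T)
    (hCd : ψv ≠ 0 → C ≤ dd)
    (hST : ψv ≠ 0 → ((Real.sqrt A + Real.sqrt C)^2) ^ (q-1) ≤ T) :
    ψv * (A + 2*B + C) ^ q
      ≤ ψv * A ^ q + q * A ^ (q-1) * (ψv * (2*B + C)) + ψv * (36 * q^2 * dd * T) := by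
  rcases hψ.eq_or_lt with h0 | h0
  · rw [← h0]
    simp
  · have hks := key_scalar hq hA hC hCS
    have hCb : C * ((Real.sqrt A + Real.sqrt C)^2) ^ (q-1) ≤ dd * T :=
      mul_le_mul (hCd h0.ne') (hST h0.ne')
        (Real.rpow_nonneg (sq_nonneg _) _) hdd
    have h1 := mul_le_mul_of_nonneg_left hks h0.le
    have h2 := mul_le_mul_of_nonneg_left
      (mul_le_mul_of_nonneg_left hCb (by positivity : (0:ℝ) ≤ 36 * q^2)) h0.le
    nlinarith [h1, h2]

set_option maxHeartbeats 1000000 in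
/-- Core bound on the interpolated value. -/
lemma interp_le_core (d : ℕ) (r' q : ℝ) (hr' : 2 ≤ r') (hqd : q = r'/2)
    (δ : ℝ) (hδ : 0 < δ) (mlo Mhi : Fin d → ℤ) (hmM : ∀ i, mlo i ≤ Mhi i)
    (h0 : ∀ i, δ * mlo i ≤ 0 ∧ (0:ℝ) ≤ δ * Mhi i) (x : EuclideanSpace ℝ (Fin d)) :
    interp d δ mlo Mhi (fun y => 1 + ‖y‖ ^ r') x
      ≤ 1 + ‖x‖ ^ r' + q * (1 + ‖x‖ ^ r') * (d * δ^2)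
        + 36 * q^2 * (d * δ^2) * (((‖x‖ + Real.sqrt d * δ)^2) ^ (q-1)) := by
  have hq1 : (1:ℝ) ≤ q := by rw [hqd]; linarith
  have hq0 : (0:ℝ) < q := by linarith
  have hq10 : (0:ℝ) ≤ q - 1 := by linarith
  set p : EuclideanSpace ℝ (Fin d) := boxProj d δ mlo Mhi x with hp
  set ψ : (Fin d → ℤ) → ℝ := fun k => ∏ i, max 0 (1 - |p i - δ * k i| / δ) with hψdef
  have hψhat : ∀ k, hatFn d δ (gridPt d δ k) p = ψ k := fun k => rfl
  have hmem : ∀ i, δ * mlo i ≤ p i ∧ p i ≤ δ * Mhi i := by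
    intro i
    constructor
    · exact le_max_left _ _
    · apply max_le
      · exact mul_le_mul_of_nonneg_left (by exact_mod_cast hmM i : ((mlo i : ℤ) : ℝ) ≤ Mhi i) hδ.le
      · exact min_le_right _ _
  have hsum1 : ∑ k ∈ Finset.Icc mlo Mhi, ψ k = 1 := hatSum_one hδ hmM p hmem
  have hsumlin : ∀ i₀ : Fin d, ∑ k ∈ Finset.Icc mlo Mhi, ψ k * (δ * k i₀) = p i₀ :=
    fun i₀ => hatSum_lin hδ hmM p hmem i₀
  set A : ℝ := ∑ i, (p i)^2 with hA
  set Bk : (Fin d → ℤ) → ℝ := fun k => ∑ i, p i * (δ * k i - p i) with hBk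
  set Ck : (Fin d → ℤ) → ℝ := fun k => ∑ i, (δ * k i - p i)^2 with hCk
  have hA0 : 0 ≤ A := Finset.sum_nonneg fun i _ => sq_nonneg _
  have hC0 : ∀ k, 0 ≤ Ck k := fun k => Finset.sum_nonneg fun i _ => sq_nonneg _
  have hdecomp : ∀ k : Fin d → ℤ, (∑ i, (δ * k i)^2) = A + 2 * Bk k + Ck k := by
    intro k
    have h1 : ∀ i : Fin d, (δ * k i)^2
        = (p i)^2 + 2 * (p i * (δ * k i - p i)) + (δ * k i - p i)^2 := by
      intro i; ring
    rw [Finset.sum_congr rfl (fun i _ => h1 i), Finset.sum_add_distrib,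
      Finset.sum_add_distrib, ← Finset.mul_sum]
  have hCS : ∀ k, (Bk k)^2 ≤ A * Ck k := by
    intro k
    exact Finset.sum_mul_sq_le_sq_mul_sq Finset.univ p (fun i => δ * k i - p i)
  have hnormsq : ∀ v : EuclideanSpace ℝ (Fin d), ‖v‖^2 = ∑ i, (v i)^2 := by
    intro v
    rw [EuclideanSpace.norm_eq, Real.sq_sqrt (Finset.sum_nonneg fun i _ => sq_nonneg _)]
    simp [Real.norm_eq_abs, sq_abs]
  have hpow2q : ∀ t : ℝ, 0 ≤ t → (t^2) ^ q = t ^ r' := by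
    intro t ht
    rw [← Real.rpow_natCast t 2, ← Real.rpow_mul ht]
    have : ((2:ℕ):ℝ) * q = r' := by push_cast; rw [hqd]; ring
    rw [this]
  have hGnorm : ∀ k : Fin d → ℤ, ‖gridPt d δ k‖ ^ r' = (A + 2 * Bk k + Ck k) ^ q := by
    intro k
    rw [← hpow2q _ (norm_nonneg _), hnormsq (gridPt d δ k), ← hdecomp k]
    rfl
  have hsupp : ∀ k : Fin d → ℤ, ψ k ≠ 0 → Ck k ≤ d * δ^2 := by
    intro k hk
    have hfac : ∀ i, |p i - δ * k i| ≤ δ := by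
      intro i
      by_contra hcon
      push_neg at hcon
      exact hk (Finset.prod_eq_zero (Finset.mem_univ i) (hat1d_zero hδ hcon.le))
    have h1 : ∀ i : Fin d, (δ * k i - p i)^2 ≤ δ^2 := by
      intro i
      have h2 := abs_le.mp (hfac i)
      exact sq_le_sq' (by linarith [h2.2]) (by linarith [h2.1])
    calc Ck k ≤ ∑ _i : Fin d, δ^2 := Finset.sum_le_sum fun i _ => h1 i
      _ = d * δ^2 := by rw [Finset.sum_const, Finset.card_univ, Fintype.card_fin,
        nsmul_eq_mul]
  have hψ0 : ∀ k, 0 ≤ ψ k := fun k => Finset.prod_nonneg fun i _ => le_max_left 0 _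
  have hcenter : ∀ i₀ : Fin d,
      ∑ k ∈ Finset.Icc mlo Mhi, ψ k * (δ * k i₀ - p i₀) = 0 := by
    intro i₀
    have h1 : ∀ k : Fin d → ℤ, ψ k * (δ * k i₀ - p i₀)
        = ψ k * (δ * k i₀) - ψ k * p i₀ := by intro k; ring
    rw [Finset.sum_congr rfl (fun k _ => h1 k), Finset.sum_sub_distrib, hsumlin i₀,
      ← Finset.sum_mul, hsum1, one_mul, sub_self]
  have hBsum : ∑ k ∈ Finset.Icc mlo Mhi, ψ k * Bk k = 0 := by
    have h1 : ∀ k : Fin d → ℤ, ψ k * Bk k = ∑ i, p i * (ψ k * (δ * k i - p i)) := by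
      intro k
      simp only [hBk]
      rw [Finset.mul_sum]
      apply Finset.sum_congr rfl
      intro i _
      ring
    rw [Finset.sum_congr rfl (fun k _ => h1 k), Finset.sum_comm]
    apply Finset.sum_eq_zero
    intro i _
    rw [← Finset.mul_sum, hcenter i, mul_zero]
  have hCsum : ∑ k ∈ Finset.Icc mlo Mhi, ψ k * Ck k ≤ d * δ^2 := by
    calc ∑ k ∈ Finset.Icc mlo Mhi, ψ k * Ck k
        ≤ ∑ k ∈ Finset.Icc mlo Mhi, ψ k * (d * δ^2) := by
          apply Finset.sum_le_sum
          intro k _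
          rcases (hψ0 k).eq_or_lt with h | h
          · rw [← h, zero_mul, zero_mul]
          · exact mul_le_mul_of_nonneg_left (hsupp k h.ne') h.le
      _ = d * δ^2 := by rw [← Finset.sum_mul, hsum1, one_mul]
  set X : ℝ := ‖x‖ with hX
  have hX0 : (0:ℝ) ≤ X := norm_nonneg _
  have hAX : A ≤ X^2 := by
    rw [hX, hnormsq x, hA]
    apply Finset.sum_le_sum
    intro i _
    have : p i = max (δ * mlo i) (min (x i) (δ * Mhi i)) := rfl
    rw [this]
    exact clamp_sq_le (h0 i).1 (h0 i).2
  have hsqA : Real.sqrt A ≤ X := by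
    calc Real.sqrt A ≤ Real.sqrt (X^2) := Real.sqrt_le_sqrt hAX
      _ = X := Real.sqrt_sq hX0
  set b : ℝ := Real.sqrt d * δ with hb
  have hb0 : 0 ≤ b := mul_nonneg (Real.sqrt_nonneg _) hδ.le
  have hbsq : b^2 = d * δ^2 := by
    rw [hb, mul_pow, Real.sq_sqrt (by positivity : (0:ℝ) ≤ (d:ℝ))]
  have hbC : ∀ k, ψ k ≠ 0 → Real.sqrt (Ck k) ≤ b := by
    intro k hk
    calc Real.sqrt (Ck k) ≤ Real.sqrt (b^2) := by
          apply Real.sqrt_le_sqrt; rw [hbsq]; exact hsupp k hk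
      _ = b := Real.sqrt_sq hb0
  set T : ℝ := ((X + b)^2) ^ (q-1) with hT
  have hT0 : (0:ℝ) ≤ T := Real.rpow_nonneg (sq_nonneg _) _
  have hkey : ∀ k ∈ Finset.Icc mlo Mhi,
      ψ k * ‖gridPt d δ k‖ ^ r'
        ≤ ψ k * A ^ q + q * A ^ (q-1) * (ψ k * (2 * Bk k + Ck k))
          + ψ k * (36 * q^2 * (d * δ^2) * T) := by
    intro k _
    rw [hGnorm k]
    apply weighted_key hq1 (hψ0 k) hA0 (hC0 k) (hCS k) (by positivity) hT0
      (hsupp k)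
    intro hk
    rw [hT]
    apply Real.rpow_le_rpow (sq_nonneg _) _ hq10
    apply pow_le_pow_left₀ (by positivity)
    exact add_le_add hsqA (hbC k hk)
  have hsumkey : ∑ k ∈ Finset.Icc mlo Mhi, ψ k * ‖gridPt d δ k‖ ^ r'
      ≤ A ^ q + q * A ^ (q-1) * (d * δ^2) + 36 * q^2 * (d * δ^2) * T := by
    have h1 := Finset.sum_le_sum hkey
    have ha1 : ∑ k ∈ Finset.Icc mlo Mhi, ψ k * A ^ q = A ^ q := by
      rw [← Finset.sum_mul, hsum1, one_mul]
    have ha2 : ∑ k ∈ Finset.Icc mlo Mhi, q * A ^ (q-1) * (ψ k * (2 * Bk k + Ck k))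
        = q * A ^ (q-1) * (∑ k ∈ Finset.Icc mlo Mhi, ψ k * (2 * Bk k + Ck k)) :=
      (Finset.mul_sum _ _ _).symm
    have ha3 : ∑ k ∈ Finset.Icc mlo Mhi, ψ k * (36 * q^2 * (d * δ^2) * T)
        = 36 * q^2 * (d * δ^2) * T := by
      rw [← Finset.sum_mul, hsum1, one_mul]
    have ha4 : ∑ k ∈ Finset.Icc mlo Mhi, ψ k * (2 * Bk k + Ck k)
        = ∑ k ∈ Finset.Icc mlo Mhi, ψ k * Ck k := by
      have e2 : ∀ k : Fin d → ℤ, ψ k * (2 * Bk k + Ck k)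
          = 2 * (ψ k * Bk k) + ψ k * Ck k := by intro k; ring
      rw [Finset.sum_congr rfl (fun k _ => e2 k), Finset.sum_add_distrib,
        ← Finset.mul_sum, hBsum, mul_zero, zero_add]
    rw [Finset.sum_add_distrib, Finset.sum_add_distrib, ha1, ha2, ha3, ha4] at h1
    have h3 : q * A ^ (q-1) * (∑ k ∈ Finset.Icc mlo Mhi, ψ k * Ck k)
        ≤ q * A ^ (q-1) * (d * δ^2) := by
      apply mul_le_mul_of_nonneg_left hCsum
      exact mul_nonneg hq0.le (Real.rpow_nonneg hA0 _)
    linarith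
  have hval : interp d δ mlo Mhi (fun y => 1 + ‖y‖ ^ r') x
      = 1 + ∑ k ∈ Finset.Icc mlo Mhi, ψ k * ‖gridPt d δ k‖ ^ r' := by
    rw [interp]
    have e1 : ∀ k : Fin d → ℤ,
        hatFn d δ (gridPt d δ k) (boxProj d δ mlo Mhi x)
          • ((fun y => 1 + ‖y‖ ^ r') (gridPt d δ k))
        = ψ k + ψ k * ‖gridPt d δ k‖ ^ r' := by
      intro k
      rw [smul_eq_mul, ← hp, hψhat k]
      ring
    rw [Finset.sum_congr rfl (fun k _ => e1 k), Finset.sum_add_distrib, hsum1]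
  have hAqX : A ^ q ≤ X ^ r' := by
    rw [← hpow2q X hX0]
    exact Real.rpow_le_rpow hA0 hAX hq0.le
  have hpow2q1 : (X^2) ^ (q-1) = X ^ (r'-2) := by
    rw [← Real.rpow_natCast X 2, ← Real.rpow_mul hX0]
    have : ((2:ℕ):ℝ) * (q - 1) = r' - 2 := by push_cast; rw [hqd]; ring
    rw [this]
  have hAq1 : A ^ (q-1) ≤ 1 + X ^ r' := by
    calc A ^ (q-1) ≤ (X^2) ^ (q-1) := Real.rpow_le_rpow hA0 hAX hq10
      _ = X ^ (r'-2) := hpow2q1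
      _ ≤ 1 + X ^ r' := rpow_sub_two_le hX0 hr'
  have hXr0 : (0:ℝ) ≤ X ^ r' := Real.rpow_nonneg hX0 _
  have h3 : q * A ^ (q-1) * (d * δ^2) ≤ q * (1 + X ^ r') * (d * δ^2) := by
    apply mul_le_mul_of_nonneg_right _ (by positivity)
    exact mul_le_mul_of_nonneg_left hAq1 hq0.le
  rw [hval]
  linarith [hsumkey, hAqX, h3]

/-- For `r' ≥ 2`, `ρ_{r'}(x) = 1 + |x|^{r'}`, there is a constant `C ≥ 0` depending only on
`d` and `r'` such that for every mesh size `δ > 0` and every box subgrid of `δℤ^d` whose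
convex hull contains `0`, `sup_{x∈ℝ^d} Pρ_{r'}(x)/ρ_{r'}(x) ≤ 1 + C δ² (1 + δ^{r'})`. -/
theorem interp_rho_ratio_bound
    (d : ℕ) (hd : 1 ≤ d) (r' : ℝ) (hr' : 2 ≤ r') :
    ∃ C : ℝ, 0 ≤ C ∧
      ∀ δ : ℝ, 0 < δ →
      ∀ mlo Mhi : Fin d → ℤ, (∀ i, mlo i ≤ Mhi i) →
      (∀ i, δ * mlo i ≤ 0 ∧ (0:ℝ) ≤ δ * Mhi i) →
      ∀ x : EuclideanSpace ℝ (Fin d),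
        interp d δ mlo Mhi (fun y => 1 + ‖y‖ ^ r') x / (1 + ‖x‖ ^ r')
          ≤ 1 + C * δ ^ 2 * (1 + δ ^ r') := by
  have hq1 : (1:ℝ) ≤ r'/2 := by linarith
  have hd1 : (1:ℝ) ≤ (d:ℝ) := by exact_mod_cast hd
  set q : ℝ := r'/2 with hqd
  have hq0 : (0:ℝ) < q := by linarith
  have h2r0 : (0:ℝ) ≤ (2:ℝ) ^ r' := Real.rpow_nonneg (by norm_num) _
  have hdr0 : (0:ℝ) ≤ (d:ℝ) ^ r' := Real.rpow_nonneg (by positivity) _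
  refine ⟨q * d + 36 * q^2 * d * 2 ^ r' * (1 + (d:ℝ) ^ r'), ?_, ?_⟩
  · have h4 : (0:ℝ) ≤ (d:ℝ) := by positivity
    have h5 : (0:ℝ) ≤ 36 * q^2 * d := by positivity
    have h6 : (0:ℝ) ≤ 36 * q^2 * d * 2 ^ r' * (1 + (d:ℝ)^r') := by
      apply mul_nonneg (mul_nonneg h5 h2r0) (by linarith)
    have h7 : (0:ℝ) ≤ q * d := by positivity
    linarith
  intro δ hδ mlo Mhi hmM h0 x
  set X : ℝ := ‖x‖ with hX
  have hX0 : (0:ℝ) ≤ X := norm_nonneg _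
  have hXr0 : (0:ℝ) ≤ X ^ r' := Real.rpow_nonneg hX0 _
  have hδr0 : (0:ℝ) ≤ δ ^ r' := Real.rpow_nonneg hδ.le _
  have hcore := interp_le_core d r' q hr' hqd δ hδ mlo Mhi hmM h0 x
  rw [← hX] at hcore
  set b : ℝ := Real.sqrt d * δ with hb
  have hb0 : 0 ≤ b := mul_nonneg (Real.sqrt_nonneg _) hδ.le
  have hq10 : (0:ℝ) ≤ q - 1 := by linarith
  have hpow2q1 : ((X + b)^2) ^ (q-1) = (X + b) ^ (r'-2) := by
    rw [← Real.rpow_natCast (X + b) 2, ← Real.rpow_mul (by linarith)]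
    have : ((2:ℕ):ℝ) * (q - 1) = r' - 2 := by push_cast; rw [hqd]; ring
    rw [this]
  have hTfin : ((X + b)^2) ^ (q-1)
      ≤ 2 ^ r' * ((1 + X ^ r') + (d:ℝ) ^ r' * (1 + δ ^ r')) := by
    rw [hpow2q1]
    have e2 : (X + b) ^ (r'-2) ≤ 2 ^ (r'-2) * (X ^ (r'-2) + b ^ (r'-2)) :=
      add_rpow_le_two2 hX0 hb0 (by linarith)
    have e3 : (2:ℝ) ^ (r'-2) ≤ 2 ^ r' :=
      Real.rpow_le_rpow_of_exponent_le (by norm_num) (by linarith)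
    have e4 : X ^ (r'-2) ≤ 1 + X ^ r' := rpow_sub_two_le hX0 hr'
    have e5 : b ^ (r'-2) ≤ (d:ℝ) ^ r' * (1 + δ ^ r') := by
      have f1 : Real.sqrt d ≤ (d:ℝ) := by
        calc Real.sqrt d ≤ Real.sqrt ((d:ℝ)^2) := by
              apply Real.sqrt_le_sqrt; nlinarith
          _ = (d:ℝ) := Real.sqrt_sq (by positivity)
      have f2 : b ≤ (d:ℝ) * δ := mul_le_mul_of_nonneg_right f1 hδ.le
      have f3 : b ^ (r'-2) ≤ ((d:ℝ) * δ) ^ (r'-2) :=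
        Real.rpow_le_rpow hb0 f2 (by linarith)
      have f4 : ((d:ℝ) * δ) ^ (r'-2) = (d:ℝ) ^ (r'-2) * δ ^ (r'-2) :=
        Real.mul_rpow (by positivity) hδ.le
      have f5 : (d:ℝ) ^ (r'-2) ≤ (d:ℝ) ^ r' :=
        Real.rpow_le_rpow_of_exponent_le hd1 (by linarith)
      have f6 : δ ^ (r'-2) ≤ 1 + δ ^ r' := rpow_sub_two_le hδ.le hr'
      calc b ^ (r'-2) ≤ (d:ℝ) ^ (r'-2) * δ ^ (r'-2) := by rw [← f4]; exact f3
        _ ≤ (d:ℝ) ^ r' * (1 + δ ^ r') := by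
            apply mul_le_mul f5 f6 (Real.rpow_nonneg hδ.le _) hdr0
    have g1 : X ^ (r'-2) + b ^ (r'-2) ≤ (1 + X ^ r') + (d:ℝ) ^ r' * (1 + δ ^ r') := by
      linarith
    have g2 : (0:ℝ) ≤ X ^ (r'-2) + b ^ (r'-2) := by positivity
    calc (X + b) ^ (r'-2) ≤ 2 ^ (r'-2) * (X ^ (r'-2) + b ^ (r'-2)) := e2
      _ ≤ 2 ^ r' * ((1 + X ^ r') + (d:ℝ) ^ r' * (1 + δ ^ r')) :=
          mul_le_mul e3 g1 g2 h2r0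
  have hpos : (0:ℝ) < 1 + X ^ r' := by linarith
  rw [show (1:ℝ) + ‖x‖ ^ r' = 1 + X ^ r' from rfl]
  rw [div_le_iff₀ hpos]
  have hdr1 : (1:ℝ) ≤ (d:ℝ) ^ r' := Real.one_le_rpow hd1 (by linarith)
  have t2 : 36 * q^2 * (d * δ^2) * (((X + b)^2) ^ (q-1))
      ≤ 36 * q^2 * (d * δ^2) * (2 ^ r' * (1 + (d:ℝ) ^ r') * ((1 + δ ^ r') * (1 + X ^ r'))) := by
    have u1 : (1 + X ^ r') + (d:ℝ) ^ r' * (1 + δ ^ r')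
        ≤ (1 + (d:ℝ) ^ r') * ((1 + δ ^ r') * (1 + X ^ r')) := by
      nlinarith [mul_nonneg hδr0 hXr0, mul_nonneg hdr0 hXr0,
        mul_nonneg (mul_nonneg hdr0 hδr0) hXr0]
    have u2 : ((X + b)^2) ^ (q-1)
        ≤ 2 ^ r' * (1 + (d:ℝ) ^ r') * ((1 + δ ^ r') * (1 + X ^ r')) := by
      calc ((X + b)^2) ^ (q-1)
          ≤ 2 ^ r' * ((1 + X ^ r') + (d:ℝ) ^ r' * (1 + δ ^ r')) := hTfin
        _ ≤ 2 ^ r' * ((1 + (d:ℝ) ^ r') * ((1 + δ ^ r') * (1 + X ^ r'))) :=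
            mul_le_mul_of_nonneg_left u1 h2r0
        _ = 2 ^ r' * (1 + (d:ℝ) ^ r') * ((1 + δ ^ r') * (1 + X ^ r')) := by ring
    exact mul_le_mul_of_nonneg_left u2 (by positivity)
  have t1 : q * (1 + X ^ r') * (d * δ^2)
      ≤ q * (d * δ^2) * ((1 + δ ^ r') * (1 + X ^ r')) := by
    have u1 : (1 + X ^ r') ≤ (1 + δ ^ r') * (1 + X ^ r') := by
      nlinarith [mul_nonneg hδr0 hXr0]
    calc q * (1 + X ^ r') * (d * δ^2) = q * (d * δ^2) * (1 + X ^ r') := by ring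
      _ ≤ q * (d * δ^2) * ((1 + δ ^ r') * (1 + X ^ r')) :=
          mul_le_mul_of_nonneg_left u1 (by positivity)
  calc interp d δ mlo Mhi (fun y => 1 + ‖y‖ ^ r') x
      ≤ 1 + X ^ r' + q * (1 + X ^ r') * (d * δ^2)
        + 36 * q^2 * (d * δ^2) * (((X + b)^2) ^ (q-1)) := hcore
    _ ≤ (1 + (q * d + 36 * q^2 * d * 2 ^ r' * (1 + (d:ℝ) ^ r')) * δ ^ 2 * (1 + δ ^ r'))
        * (1 + X ^ r') := by nlinarith [t1, t2]
end
end

section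
/- Let d ≥ 1, p ∈ (1, ∞), r ≥ 0 and θ > 0. Let M(dx) = c·(1 + |x|)^{−(pr+d+1)} dx be the probability measure on ℝ^d obtained by normalization (c > 0), and let γ_d denote the standard Gaussian measure on ℝ^d (density (2π)^{−d/2} e^{−|y|²/2}). Define c_p^p := (∫₀^∞ (max(t,1))^{(pr+d+1)/2} θ e^{−θt} dt) · (∫_{ℝ^d} (1 + |y|)^{pr+d+1} γ_d(dy)); then c_p < ∞. Moreover, for every measurable w : ℝ^d → ℝ^m satisfying ‖w(x)‖ ≤ C_w·(1 + |x|^r) for some C_w ≥ 0 and all x, one has ∫_{ℝ^d} ‖w(x)‖^p M(dx) < ∞ and ∫_{ℝ^d} [∫₀^∞ ∫_{ℝ^d} ‖w(x + √t · y)‖^p γ_d(dy) θ e^{−θt} dt] M(dx) ≤ c_p^p · ∫_{ℝ^d} ‖w(x)‖^p M(dx). (When X^x_t = x + W_t is a Brownian motion started at x and E ~ Exp(θ) is independent of W, the inner double integral equals E[‖w(X^x_E)‖^p], so this is the L^p-stability condition used for the contraction with constant c_p.) -/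
open MeasureTheory
open scoped ENNReal

set_option maxHeartbeats 1000000

private lemma aux_exp_int {q θ : ℝ} (hq : 0 < q) (hθ : 0 < θ) :
    IntegrableOn (fun t => (max t 1) ^ (q / 2) * (θ * Real.exp (-θ * t))) (Set.Ioi (0:ℝ)) := by
  set ε : ℝ := min 1 (θ / q) with hε
  have hε0 : 0 < ε := lt_min one_pos (div_pos hθ hq)
  have hε1 : ε ≤ 1 := min_le_left _ _
  have hεq : ε * q ≤ θ := by
    have h := min_le_right 1 (θ / q)
    calc ε * q ≤ (θ / q) * q := by nlinarith
      _ = θ := by field_simp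
  have hcont : Continuous fun t : ℝ => (max t 1) ^ (q / 2) * (θ * Real.exp (-θ * t)) := by
    have h1 : Continuous fun t : ℝ => max t 1 := continuous_id.max continuous_const
    exact (h1.rpow_const (fun t => Or.inl (by positivity))).mul
      (continuous_const.mul ((continuous_const.mul continuous_id).rexp))
  refine ((exp_neg_integrableOn_Ioi 0 (half_pos hθ)).const_mul
      ((ε⁻¹ ^ (q / 2)) * θ)).mono' hcont.aestronglyMeasurable ?_
  filter_upwards [ae_restrict_mem measurableSet_Ioi] with t ht
  have ht0 : (0:ℝ) < t := ht
  have h1 : max t 1 ≤ ε⁻¹ * Real.exp (ε * t) := by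
    have h2 : ε * (1 + t) ≤ Real.exp (ε * t) := by
      have h3 := Real.add_one_le_exp (ε * t)
      nlinarith
    have h3 : max t 1 ≤ 1 + t := max_le (by linarith) (by linarith)
    rw [inv_mul_eq_div, le_div_iff₀ hε0]
    nlinarith
  have h4 : (max t 1) ^ (q / 2) ≤ (ε⁻¹) ^ (q / 2) * Real.exp (ε * t) ^ (q / 2) := by
    rw [← Real.mul_rpow (by positivity) (Real.exp_pos _).le]
    exact Real.rpow_le_rpow (by positivity) h1 (by positivity)
  have h5 : Real.exp (ε * t) ^ (q / 2) = Real.exp (ε * t * (q / 2)) := by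
    rw [Real.rpow_def_of_pos (Real.exp_pos _), Real.log_exp]
  have h6 : Real.exp (ε * t * (q / 2)) ≤ Real.exp (θ / 2 * t) := by
    apply Real.exp_le_exp.mpr
    nlinarith
  rw [Real.norm_eq_abs, abs_of_nonneg (by positivity)]
  have h7 : (max t 1) ^ (q / 2) ≤ (ε⁻¹) ^ (q / 2) * Real.exp (θ / 2 * t) := by
    calc (max t 1) ^ (q / 2) ≤ (ε⁻¹) ^ (q / 2) * Real.exp (ε * t) ^ (q / 2) := h4
      _ ≤ (ε⁻¹) ^ (q / 2) * Real.exp (θ / 2 * t) := by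
          rw [h5]; exact mul_le_mul_of_nonneg_left h6 (by positivity)
  calc (max t 1) ^ (q / 2) * (θ * Real.exp (-θ * t))
      ≤ ((ε⁻¹) ^ (q / 2) * Real.exp (θ / 2 * t)) * (θ * Real.exp (-θ * t)) := by
        apply mul_le_mul_of_nonneg_right h7 (by positivity)
    _ = (ε⁻¹) ^ (q / 2) * θ * (Real.exp (θ / 2 * t) * Real.exp (-θ * t)) := by ring
    _ = (ε⁻¹) ^ (q / 2) * θ * Real.exp (-(θ / 2) * t) := by
        rw [← Real.exp_add]; congr 1; ring

private lemma aux_gauss_int (d : ℕ) {q : ℝ} (hq : 0 ≤ q) :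
    Integrable (fun y : EuclideanSpace ℝ (Fin d) =>
      (2 * Real.pi) ^ (-(d:ℝ) / 2) * Real.exp (-‖y‖ ^ 2 / 2) * (1 + ‖y‖) ^ q) := by
  have base : Integrable (fun v : EuclideanSpace ℝ (Fin d) =>
      Real.exp (-(1/4 : ℝ) * ‖v‖ ^ 2)) := by
    have h := (GaussianFourier.integrable_cexp_neg_mul_sq_norm_add_of_euclideanSpace
      (b := ((1/4 : ℝ) : ℂ)) (by norm_num) 0 (0 : EuclideanSpace ℝ (Fin d))).norm
    simpa [Complex.norm_exp, ← Complex.ofReal_pow] using h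
  have hC : (0:ℝ) ≤ (2 * Real.pi) ^ (-(d:ℝ) / 2) := by positivity
  refine (base.const_mul ((2 * Real.pi) ^ (-(d:ℝ) / 2) * Real.exp (q ^ 2))).mono' ?_ ?_
  · apply Continuous.aestronglyMeasurable
    apply Continuous.mul
    · exact continuous_const.mul (((continuous_norm.pow 2).neg.div_const 2).rexp)
    · exact (continuous_const.add continuous_norm).rpow_const
        (fun y => Or.inr hq)
  · refine Filter.Eventually.of_forall fun y => ?_
    set s : ℝ := ‖y‖ with hs
    have hs0 : 0 ≤ s := norm_nonneg y
    rw [Real.norm_eq_abs, abs_of_nonneg (by positivity)]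
    have e1 : (1 + s) ^ q ≤ Real.exp (q * s) := by
      calc (1 + s) ^ q ≤ Real.exp s ^ q :=
            Real.rpow_le_rpow (by positivity) (by linarith [Real.add_one_le_exp s]) hq
        _ = Real.exp (s * q) := by
            rw [Real.rpow_def_of_pos (Real.exp_pos _), Real.log_exp]
        _ = Real.exp (q * s) := by rw [mul_comm]
    have e2 : Real.exp (-s ^ 2 / 2) * Real.exp (q * s)
        ≤ Real.exp (q ^ 2) * Real.exp (-(1/4 : ℝ) * s ^ 2) := by
      rw [← Real.exp_add, ← Real.exp_add]
      apply Real.exp_le_exp.mpr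
      nlinarith [sq_nonneg (s / 2 - q)]
    calc (2 * Real.pi) ^ (-(d:ℝ) / 2) * Real.exp (-s ^ 2 / 2) * (1 + s) ^ q
        ≤ (2 * Real.pi) ^ (-(d:ℝ) / 2) * Real.exp (-s ^ 2 / 2) * Real.exp (q * s) := by
          apply mul_le_mul_of_nonneg_left e1 (by positivity)
      _ = (2 * Real.pi) ^ (-(d:ℝ) / 2) * (Real.exp (-s ^ 2 / 2) * Real.exp (q * s)) := by ring
      _ ≤ (2 * Real.pi) ^ (-(d:ℝ) / 2) * (Real.exp (q ^ 2) * Real.exp (-(1/4 : ℝ) * s ^ 2)) := by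
          apply mul_le_mul_of_nonneg_left e2 hC
      _ = (2 * Real.pi) ^ (-(d:ℝ) / 2) * Real.exp (q ^ 2) * Real.exp (-(1/4 : ℝ) * s ^ 2) := by
          ring

private lemma aux_transl {q c : ℝ} (hq : 0 ≤ q) (hc : 0 ≤ c) {d : ℕ}
    (a x : EuclideanSpace ℝ (Fin d)) :
    c * (1 + ‖x‖) ^ (-q) ≤ (1 + ‖a‖) ^ q * (c * (1 + ‖x + a‖) ^ (-q)) := by
  have hu : (0:ℝ) < 1 + ‖x‖ := by positivity
  have hs : (0:ℝ) < 1 + ‖x + a‖ := by positivity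
  have hv : (0:ℝ) < 1 + ‖a‖ := by positivity
  have key : 1 + ‖x + a‖ ≤ (1 + ‖a‖) * (1 + ‖x‖) := by
    have h := norm_add_le x a
    nlinarith [norm_nonneg x, norm_nonneg a]
  have h2 : (1 + ‖x‖)⁻¹ ≤ (1 + ‖a‖) * (1 + ‖x + a‖)⁻¹ := by
    rw [inv_eq_one_div, mul_comm (1 + ‖a‖), inv_mul_eq_div, div_le_div_iff₀ hu hs]
    nlinarith
  calc c * (1 + ‖x‖) ^ (-q) = c * ((1 + ‖x‖)⁻¹) ^ q := by
        rw [Real.rpow_neg hu.le, ← Real.inv_rpow hu.le]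
    _ ≤ c * ((1 + ‖a‖) * (1 + ‖x + a‖)⁻¹) ^ q :=
        mul_le_mul_of_nonneg_left (Real.rpow_le_rpow (by positivity) h2 hq) hc
    _ = (1 + ‖a‖) ^ q * (c * (1 + ‖x + a‖) ^ (-q)) := by
        rw [Real.mul_rpow hv.le (by positivity), Real.inv_rpow hs.le, ← Real.rpow_neg hs.le]
        ring

private lemma aux_sqrt {q : ℝ} (hq : 0 ≤ q) (t : ℝ) {d : ℕ} (y : EuclideanSpace ℝ (Fin d)) :
    (1 + ‖Real.sqrt t • y‖) ^ q ≤ (max t 1) ^ (q / 2) * (1 + ‖y‖) ^ q := by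
  have h0 : ‖Real.sqrt t • y‖ = Real.sqrt t * ‖y‖ := by
    rw [norm_smul, Real.norm_eq_abs, abs_of_nonneg (Real.sqrt_nonneg t)]
  have hm : (0:ℝ) < max t 1 := lt_of_lt_of_le one_pos (le_max_right t 1)
  have h1 : Real.sqrt t ≤ Real.sqrt (max t 1) := Real.sqrt_le_sqrt (le_max_left t 1)
  have h2 : (1:ℝ) ≤ Real.sqrt (max t 1) := by
    exact Real.one_le_sqrt.mpr (le_max_right t 1)
  have key : 1 + ‖Real.sqrt t • y‖ ≤ Real.sqrt (max t 1) * (1 + ‖y‖) := by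
    rw [h0]
    nlinarith [norm_nonneg y, Real.sqrt_nonneg t,
      mul_le_mul_of_nonneg_right h1 (norm_nonneg y)]
  calc (1 + ‖Real.sqrt t • y‖) ^ q ≤ (Real.sqrt (max t 1) * (1 + ‖y‖)) ^ q :=
        Real.rpow_le_rpow (by positivity) key hq
    _ = Real.sqrt (max t 1) ^ q * (1 + ‖y‖) ^ q :=
        Real.mul_rpow (Real.sqrt_nonneg _) (by positivity)
    _ = (max t 1) ^ (q / 2) * (1 + ‖y‖) ^ q := by
        rw [Real.sqrt_eq_rpow, ← Real.rpow_mul hm.le, show (1:ℝ) / 2 * q = q / 2 by ring]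

private lemma aux_inner {d m : ℕ} {q c p : ℝ} (hq : 0 < q) (hc : 0 < c)
    (w : EuclideanSpace ℝ (Fin d) → EuclideanSpace ℝ (Fin m))
    (t : ℝ) (y : EuclideanSpace ℝ (Fin d)) (u v : ℝ≥0∞) (hu : u ≠ ⊤) (hv : v ≠ ⊤) :
    ∫⁻ x, (ENNReal.ofReal (c * (1 + ‖x‖) ^ (-q)) * u) *
        (v * ENNReal.ofReal (‖w (x + Real.sqrt t • y)‖ ^ p)) ≤
      (ENNReal.ofReal ((max t 1) ^ (q / 2)) * u) *
        ((v * ENNReal.ofReal ((1 + ‖y‖) ^ q)) *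
          (∫⁻ x, ENNReal.ofReal (c * (1 + ‖x‖) ^ (-q)) * ENNReal.ofReal (‖w x‖ ^ p))) := by
  set a : EuclideanSpace ℝ (Fin d) := Real.sqrt t • y with ha
  have step2 : (∫⁻ x, ENNReal.ofReal (c * (1 + ‖x‖) ^ (-q)) *
        ENNReal.ofReal (‖w (x + a)‖ ^ p)) ≤
      ENNReal.ofReal ((1 + ‖a‖) ^ q) *
        (∫⁻ x, ENNReal.ofReal (c * (1 + ‖x‖) ^ (-q)) * ENNReal.ofReal (‖w x‖ ^ p)) := by
    calc (∫⁻ x, ENNReal.ofReal (c * (1 + ‖x‖) ^ (-q)) * ENNReal.ofReal (‖w (x + a)‖ ^ p))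
        ≤ ∫⁻ x, (ENNReal.ofReal ((1 + ‖a‖) ^ q) * ENNReal.ofReal (c * (1 + ‖x + a‖) ^ (-q)))
            * ENNReal.ofReal (‖w (x + a)‖ ^ p) := by
          refine lintegral_mono fun x => mul_le_mul_left ?_ _
          rw [← ENNReal.ofReal_mul (by positivity)]
          exact ENNReal.ofReal_le_ofReal (aux_transl hq.le hc.le a x)
      _ = ∫⁻ x, ENNReal.ofReal ((1 + ‖a‖) ^ q) * (ENNReal.ofReal (c * (1 + ‖x + a‖) ^ (-q))
            * ENNReal.ofReal (‖w (x + a)‖ ^ p)) := lintegral_congr fun x => by ring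
      _ = ENNReal.ofReal ((1 + ‖a‖) ^ q) * ∫⁻ x, ENNReal.ofReal (c * (1 + ‖x + a‖) ^ (-q))
            * ENNReal.ofReal (‖w (x + a)‖ ^ p) :=
          lintegral_const_mul' _ _ ENNReal.ofReal_ne_top
      _ = ENNReal.ofReal ((1 + ‖a‖) ^ q) *
            (∫⁻ x, ENNReal.ofReal (c * (1 + ‖x‖) ^ (-q)) * ENNReal.ofReal (‖w x‖ ^ p)) := by
          congr 1
          exact lintegral_add_right_eq_self
            (fun z : EuclideanSpace ℝ (Fin d) =>
              ENNReal.ofReal (c * (1 + ‖z‖) ^ (-q)) * ENNReal.ofReal (‖w z‖ ^ p)) a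
  calc (∫⁻ x, (ENNReal.ofReal (c * (1 + ‖x‖) ^ (-q)) * u) *
        (v * ENNReal.ofReal (‖w (x + a)‖ ^ p)))
      = ∫⁻ x, (u * v) * (ENNReal.ofReal (c * (1 + ‖x‖) ^ (-q)) *
          ENNReal.ofReal (‖w (x + a)‖ ^ p)) := lintegral_congr fun x => by ring
    _ = (u * v) * ∫⁻ x, ENNReal.ofReal (c * (1 + ‖x‖) ^ (-q)) *
          ENNReal.ofReal (‖w (x + a)‖ ^ p) :=
        lintegral_const_mul' _ _ (ENNReal.mul_ne_top hu hv)
    _ ≤ (u * v) * (ENNReal.ofReal ((1 + ‖a‖) ^ q) *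
          (∫⁻ x, ENNReal.ofReal (c * (1 + ‖x‖) ^ (-q)) * ENNReal.ofReal (‖w x‖ ^ p))) :=
        mul_le_mul_right step2 _
    _ ≤ (u * v) * ((ENNReal.ofReal ((max t 1) ^ (q / 2)) * ENNReal.ofReal ((1 + ‖y‖) ^ q)) *
          (∫⁻ x, ENNReal.ofReal (c * (1 + ‖x‖) ^ (-q)) * ENNReal.ofReal (‖w x‖ ^ p))) := by
        refine mul_le_mul_right (mul_le_mul_left ?_ _) _
        rw [← ENNReal.ofReal_mul (by positivity)]
        exact ENNReal.ofReal_le_ofReal (aux_sqrt hq.le t y)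
    _ = (ENNReal.ofReal ((max t 1) ^ (q / 2)) * u) *
          ((v * ENNReal.ofReal ((1 + ‖y‖) ^ q)) *
            (∫⁻ x, ENNReal.ofReal (c * (1 + ‖x‖) ^ (-q)) * ENNReal.ofReal (‖w x‖ ^ p))) := by
        ring

/-- `L^p`-stability with respect to the weighted probability measure
`M(dx) = c (1+|x|)^{−(pr+d+1)} dx` of the exponentially-randomized Brownian shift:
with `γ_d` the standard Gaussian on `ℝ^d` and `E ~ Exp(θ)` independent of the Brownian
motion, `E[‖w(x + W_E)‖^p] = ∫₀^∞ ∫ ‖w(x + √t y)‖^p γ_d(dy) θ e^{−θt} dt`, and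
`∫ E[‖w(X^x_E)‖^p] M(dx) ≤ c_p^p ∫ ‖w(x)‖^p M(dx) < ∞`, with
`c_p^p = (∫₀^∞ (max(t,1))^{(pr+d+1)/2} θ e^{−θt} dt)(∫ (1+|y|)^{pr+d+1} γ_d(dy)) < ∞`. -/
theorem lp_stability_exponential_time
    (d : ℕ) (hd : 1 ≤ d) (p r θ : ℝ) (hp : 1 < p) (hr : 0 ≤ r) (hθ : 0 < θ)
    (c : ℝ) (hc : 0 < c)
    (M : Measure (EuclideanSpace ℝ (Fin d)))
    (hM : M = volume.withDensity
      (fun x => ENNReal.ofReal (c * (1 + ‖x‖) ^ (-(p * r + d + 1)))))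
    (hMprob : IsProbabilityMeasure M)
    (γ : Measure (EuclideanSpace ℝ (Fin d)))
    (hγ : γ = volume.withDensity
      (fun y => ENNReal.ofReal ((2 * Real.pi) ^ (-(d : ℝ) / 2) * Real.exp (-‖y‖ ^ 2 / 2))))
    (m : ℕ) (w : EuclideanSpace ℝ (Fin d) → EuclideanSpace ℝ (Fin m))
    (hw : Measurable w)
    (Cw : ℝ) (hCw : 0 ≤ Cw) (hgrowth : ∀ x, ‖w x‖ ≤ Cw * (1 + ‖x‖ ^ r)) :
    (∫⁻ t in Set.Ioi (0 : ℝ),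
        ENNReal.ofReal ((max t 1) ^ ((p * r + d + 1) / 2) * (θ * Real.exp (-θ * t))) < ⊤) ∧
    (∫⁻ y, ENNReal.ofReal ((1 + ‖y‖) ^ (p * r + d + 1)) ∂γ < ⊤) ∧
    (∫⁻ x, ENNReal.ofReal (‖w x‖ ^ p) ∂M < ⊤) ∧
    (∫⁻ x, (∫⁻ t in Set.Ioi (0 : ℝ),
          (∫⁻ y, ENNReal.ofReal (‖w (x + Real.sqrt t • y)‖ ^ p) ∂γ) *
            ENNReal.ofReal (θ * Real.exp (-θ * t))) ∂M
        ≤ (∫⁻ t in Set.Ioi (0 : ℝ),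
            ENNReal.ofReal ((max t 1) ^ ((p * r + d + 1) / 2) * (θ * Real.exp (-θ * t)))) *
          (∫⁻ y, ENNReal.ofReal ((1 + ‖y‖) ^ (p * r + d + 1)) ∂γ) *
          (∫⁻ x, ENNReal.ofReal (‖w x‖ ^ p) ∂M)) := by
  subst hM
  subst hγ
  have hp0 : (0:ℝ) ≤ p := by linarith
  have hq0 : (0:ℝ) < p * r + (d : ℝ) + 1 := by
    have h1 : 0 ≤ p * r := mul_nonneg hp0 hr
    have h2 : (0:ℝ) ≤ (d : ℝ) := Nat.cast_nonneg d
    linarith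
  set q : ℝ := p * r + (d : ℝ) + 1 with hqdef
  -- measurability
  have hmd : Measurable fun x : EuclideanSpace ℝ (Fin d) =>
      ENNReal.ofReal (c * (1 + ‖x‖) ^ (-q)) := by fun_prop
  have hgd : Measurable fun y : EuclideanSpace ℝ (Fin d) =>
      ENNReal.ofReal ((2 * Real.pi) ^ (-(d : ℝ) / 2) * Real.exp (-‖y‖ ^ 2 / 2)) := by fun_prop
  have het : Measurable fun t : ℝ => ENNReal.ofReal (θ * Real.exp (-θ * t)) := by fun_prop
  have hwp : Measurable fun z : EuclideanSpace ℝ (Fin d) =>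
      ENNReal.ofReal (‖w z‖ ^ p) := by fun_prop
  -- the three finiteness facts
  have hA : (∫⁻ t in Set.Ioi (0 : ℝ),
      ENNReal.ofReal ((max t 1) ^ (q / 2) * (θ * Real.exp (-θ * t)))) < ⊤ :=
    (aux_exp_int hq0 hθ).lintegral_lt_top
  have hB : (∫⁻ y : EuclideanSpace ℝ (Fin d),
      ENNReal.ofReal ((2 * Real.pi) ^ (-(d : ℝ) / 2) * Real.exp (-‖y‖ ^ 2 / 2)) *
      ENNReal.ofReal ((1 + ‖y‖) ^ q)) < ⊤ := by
    have heq : (∫⁻ y : EuclideanSpace ℝ (Fin d),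
          ENNReal.ofReal ((2 * Real.pi) ^ (-(d : ℝ) / 2) *
          Real.exp (-‖y‖ ^ 2 / 2)) * ENNReal.ofReal ((1 + ‖y‖) ^ q)) =
        ∫⁻ y : EuclideanSpace ℝ (Fin d), ENNReal.ofReal ((2 * Real.pi) ^ (-(d : ℝ) / 2) *
          Real.exp (-‖y‖ ^ 2 / 2) * (1 + ‖y‖) ^ q) :=
      lintegral_congr fun y => (ENNReal.ofReal_mul (by positivity)).symm
    rw [heq]
    exact (aux_gauss_int d hq0.le).lintegral_lt_top
  have hP3 : ∀ x : EuclideanSpace ℝ (Fin d), ‖w x‖ ^ p * (c * (1 + ‖x‖) ^ (-q)) ≤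
      ((2 * Cw) ^ p * c) * (1 + ‖x‖) ^ (-((d : ℝ) + 1)) := by
    intro x
    have hx1 : (0:ℝ) < 1 + ‖x‖ := by positivity
    have e1 : (1:ℝ) ≤ (1 + ‖x‖) ^ r := by
      calc (1:ℝ) = 1 ^ r := (Real.one_rpow r).symm
        _ ≤ (1 + ‖x‖) ^ r :=
          Real.rpow_le_rpow zero_le_one (by linarith [norm_nonneg x]) hr
    have e2 : ‖x‖ ^ r ≤ (1 + ‖x‖) ^ r :=
      Real.rpow_le_rpow (norm_nonneg x) (by linarith) hr
    have e3 : ‖w x‖ ≤ (2 * Cw) * (1 + ‖x‖) ^ r := by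
      calc ‖w x‖ ≤ Cw * (1 + ‖x‖ ^ r) := hgrowth x
        _ ≤ Cw * (2 * (1 + ‖x‖) ^ r) :=
          mul_le_mul_of_nonneg_left (by linarith) hCw
        _ = (2 * Cw) * (1 + ‖x‖) ^ r := by ring
    have e4 : ‖w x‖ ^ p ≤ (2 * Cw) ^ p * ((1 + ‖x‖) ^ r) ^ p := by
      rw [← Real.mul_rpow (by positivity) (by positivity)]
      exact Real.rpow_le_rpow (norm_nonneg _) e3 hp0
    have e5 : ((1 + ‖x‖) ^ r) ^ p = (1 + ‖x‖) ^ (r * p) := (Real.rpow_mul hx1.le r p).symm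
    calc ‖w x‖ ^ p * (c * (1 + ‖x‖) ^ (-q))
        ≤ ((2 * Cw) ^ p * (1 + ‖x‖) ^ (r * p)) * (c * (1 + ‖x‖) ^ (-q)) := by
          refine mul_le_mul_of_nonneg_right ?_ (by positivity)
          rw [← e5]; exact e4
      _ = ((2 * Cw) ^ p * c) * ((1 + ‖x‖) ^ (r * p) * (1 + ‖x‖) ^ (-q)) := by ring
      _ = ((2 * Cw) ^ p * c) * (1 + ‖x‖) ^ (-((d : ℝ) + 1)) := by
          rw [← Real.rpow_add hx1, show r * p + -q = -((d : ℝ) + 1) from by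
            rw [hqdef]; ring]
  have hdim : (Module.finrank ℝ (EuclideanSpace ℝ (Fin d)) : ℝ) < (d : ℝ) + 1 := by
    have hfr : Module.finrank ℝ (EuclideanSpace ℝ (Fin d)) = d := finrank_euclideanSpace_fin
    rw [hfr]; exact lt_add_one _
  have hI : (∫⁻ x : EuclideanSpace ℝ (Fin d), ENNReal.ofReal (c * (1 + ‖x‖) ^ (-q)) *
      ENNReal.ofReal (‖w x‖ ^ p)) < ⊤ := by
    calc (∫⁻ x, ENNReal.ofReal (c * (1 + ‖x‖) ^ (-q)) * ENNReal.ofReal (‖w x‖ ^ p))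
        = ∫⁻ x : EuclideanSpace ℝ (Fin d),
            ENNReal.ofReal (‖w x‖ ^ p * (c * (1 + ‖x‖) ^ (-q))) := by
          refine lintegral_congr fun x => ?_
          rw [← ENNReal.ofReal_mul (by positivity)]
          exact congrArg ENNReal.ofReal (mul_comm _ _)
      _ ≤ ∫⁻ x : EuclideanSpace ℝ (Fin d),
            ENNReal.ofReal (((2 * Cw) ^ p * c) * (1 + ‖x‖) ^ (-((d : ℝ) + 1))) :=
          lintegral_mono fun x => ENNReal.ofReal_le_ofReal (hP3 x)
      _ < ⊤ := ((integrable_one_add_norm hdim).const_mul _).lintegral_lt_top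
  refine ⟨hA, ?_, ?_, ?_⟩
  · rw [lintegral_withDensity_eq_lintegral_mul_non_measurable volume hgd
      (Filter.Eventually.of_forall fun _ => ENNReal.ofReal_lt_top)]
    simpa only [Pi.mul_apply] using hB
  · rw [lintegral_withDensity_eq_lintegral_mul_non_measurable volume hmd
      (Filter.Eventually.of_forall fun _ => ENNReal.ofReal_lt_top)]
    simpa only [Pi.mul_apply] using hI
  · simp only [lintegral_withDensity_eq_lintegral_mul_non_measurable volume hmd
      (Filter.Eventually.of_forall fun _ => ENNReal.ofReal_lt_top),
      lintegral_withDensity_eq_lintegral_mul_non_measurable volume hgd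
      (Filter.Eventually.of_forall fun _ => ENNReal.ofReal_lt_top),
      Pi.mul_apply]
    have hφmap : Measurable fun z : (EuclideanSpace ℝ (Fin d) × ℝ) × EuclideanSpace ℝ (Fin d)
        => z.1.1 + Real.sqrt z.1.2 • z.2 := by fun_prop
    have hΦ : Measurable fun z : (EuclideanSpace ℝ (Fin d) × ℝ) × EuclideanSpace ℝ (Fin d) =>
        (ENNReal.ofReal (c * (1 + ‖z.1.1‖) ^ (-q)) *
          ENNReal.ofReal (θ * Real.exp (-θ * z.1.2))) *
        (ENNReal.ofReal ((2 * Real.pi) ^ (-(d : ℝ) / 2) * Real.exp (-‖z.2‖ ^ 2 / 2)) *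
          ENNReal.ofReal (‖w (z.1.1 + Real.sqrt z.1.2 • z.2)‖ ^ p)) :=
      ((hmd.comp (measurable_fst.comp measurable_fst)).mul
        (het.comp (measurable_snd.comp measurable_fst))).mul
        ((hgd.comp measurable_snd).mul (hwp.comp hφmap))
    calc (∫⁻ x, ENNReal.ofReal (c * (1 + ‖x‖) ^ (-q)) *
          ∫⁻ t in Set.Ioi (0:ℝ),
            (∫⁻ y, ENNReal.ofReal ((2 * Real.pi) ^ (-(d : ℝ) / 2) * Real.exp (-‖y‖ ^ 2 / 2)) *
              ENNReal.ofReal (‖w (x + Real.sqrt t • y)‖ ^ p)) *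
            ENNReal.ofReal (θ * Real.exp (-θ * t)))
        = ∫⁻ x, ∫⁻ t in Set.Ioi (0:ℝ), ∫⁻ y,
            (ENNReal.ofReal (c * (1 + ‖x‖) ^ (-q)) *
              ENNReal.ofReal (θ * Real.exp (-θ * t))) *
            (ENNReal.ofReal ((2 * Real.pi) ^ (-(d : ℝ) / 2) * Real.exp (-‖y‖ ^ 2 / 2)) *
              ENNReal.ofReal (‖w (x + Real.sqrt t • y)‖ ^ p)) := by
          refine lintegral_congr fun x => ?_
          rw [← lintegral_const_mul' (ENNReal.ofReal (c * (1 + ‖x‖) ^ (-q))) _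
            ENNReal.ofReal_ne_top]
          refine lintegral_congr fun t => ?_
          calc ENNReal.ofReal (c * (1 + ‖x‖) ^ (-q)) *
              ((∫⁻ y, ENNReal.ofReal ((2 * Real.pi) ^ (-(d : ℝ) / 2) *
                  Real.exp (-‖y‖ ^ 2 / 2)) *
                ENNReal.ofReal (‖w (x + Real.sqrt t • y)‖ ^ p)) *
               ENNReal.ofReal (θ * Real.exp (-θ * t)))
              = (ENNReal.ofReal (c * (1 + ‖x‖) ^ (-q)) *
                  ENNReal.ofReal (θ * Real.exp (-θ * t))) *
                (∫⁻ y, ENNReal.ofReal ((2 * Real.pi) ^ (-(d : ℝ) / 2) *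
                  Real.exp (-‖y‖ ^ 2 / 2)) *
                  ENNReal.ofReal (‖w (x + Real.sqrt t • y)‖ ^ p)) := by ring
            _ = ∫⁻ y, (ENNReal.ofReal (c * (1 + ‖x‖) ^ (-q)) *
                  ENNReal.ofReal (θ * Real.exp (-θ * t))) *
                (ENNReal.ofReal ((2 * Real.pi) ^ (-(d : ℝ) / 2) *
                  Real.exp (-‖y‖ ^ 2 / 2)) *
                  ENNReal.ofReal (‖w (x + Real.sqrt t • y)‖ ^ p)) :=
              (lintegral_const_mul' _ _
                (ENNReal.mul_ne_top ENNReal.ofReal_ne_top ENNReal.ofReal_ne_top)).symm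
      _ = ∫⁻ t in Set.Ioi (0:ℝ), ∫⁻ x, ∫⁻ y,
            (ENNReal.ofReal (c * (1 + ‖x‖) ^ (-q)) *
              ENNReal.ofReal (θ * Real.exp (-θ * t))) *
            (ENNReal.ofReal ((2 * Real.pi) ^ (-(d : ℝ) / 2) * Real.exp (-‖y‖ ^ 2 / 2)) *
              ENNReal.ofReal (‖w (x + Real.sqrt t • y)‖ ^ p)) :=
          lintegral_lintegral_swap (hΦ.lintegral_prod_right').aemeasurable
      _ = ∫⁻ t in Set.Ioi (0:ℝ), ∫⁻ y, ∫⁻ x,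
            (ENNReal.ofReal (c * (1 + ‖x‖) ^ (-q)) *
              ENNReal.ofReal (θ * Real.exp (-θ * t))) *
            (ENNReal.ofReal ((2 * Real.pi) ^ (-(d : ℝ) / 2) * Real.exp (-‖y‖ ^ 2 / 2)) *
              ENNReal.ofReal (‖w (x + Real.sqrt t • y)‖ ^ p)) := by
          refine lintegral_congr fun t => ?_
          exact lintegral_lintegral_swap
            ((hΦ.comp ((measurable_fst.prodMk measurable_const).prodMk
              measurable_snd)).aemeasurable)
      _ ≤ ∫⁻ t in Set.Ioi (0:ℝ), ∫⁻ y,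
            (ENNReal.ofReal ((max t 1) ^ (q / 2)) *
              ENNReal.ofReal (θ * Real.exp (-θ * t))) *
            ((ENNReal.ofReal ((2 * Real.pi) ^ (-(d : ℝ) / 2) * Real.exp (-‖y‖ ^ 2 / 2)) *
              ENNReal.ofReal ((1 + ‖y‖) ^ q)) *
              (∫⁻ x, ENNReal.ofReal (c * (1 + ‖x‖) ^ (-q)) *
                ENNReal.ofReal (‖w x‖ ^ p))) :=
          lintegral_mono fun t => lintegral_mono fun y =>
            aux_inner hq0 hc w t y _ _ ENNReal.ofReal_ne_top ENNReal.ofReal_ne_top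
      _ = ∫⁻ t in Set.Ioi (0:ℝ),
            (ENNReal.ofReal ((max t 1) ^ (q / 2)) *
              ENNReal.ofReal (θ * Real.exp (-θ * t))) *
            ((∫⁻ y, ENNReal.ofReal ((2 * Real.pi) ^ (-(d : ℝ) / 2) *
                Real.exp (-‖y‖ ^ 2 / 2)) * ENNReal.ofReal ((1 + ‖y‖) ^ q)) *
              (∫⁻ x, ENNReal.ofReal (c * (1 + ‖x‖) ^ (-q)) *
                ENNReal.ofReal (‖w x‖ ^ p))) := by
          refine lintegral_congr fun t => ?_
          rw [lintegral_const_mul' _ _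
            (ENNReal.mul_ne_top ENNReal.ofReal_ne_top ENNReal.ofReal_ne_top),
            lintegral_mul_const' _ _ hI.ne]
      _ = (∫⁻ t in Set.Ioi (0:ℝ),
            ENNReal.ofReal ((max t 1) ^ (q / 2)) *
              ENNReal.ofReal (θ * Real.exp (-θ * t))) *
            ((∫⁻ y, ENNReal.ofReal ((2 * Real.pi) ^ (-(d : ℝ) / 2) *
                Real.exp (-‖y‖ ^ 2 / 2)) * ENNReal.ofReal ((1 + ‖y‖) ^ q)) *
              (∫⁻ x, ENNReal.ofReal (c * (1 + ‖x‖) ^ (-q)) *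
                ENNReal.ofReal (‖w x‖ ^ p))) :=
          lintegral_mul_const' _ _ (ENNReal.mul_ne_top hB.ne hI.ne)
      _ = (∫⁻ t in Set.Ioi (0:ℝ),
            ENNReal.ofReal ((max t 1) ^ (q / 2) * (θ * Real.exp (-θ * t)))) *
            ((∫⁻ y, ENNReal.ofReal ((2 * Real.pi) ^ (-(d : ℝ) / 2) *
                Real.exp (-‖y‖ ^ 2 / 2)) * ENNReal.ofReal ((1 + ‖y‖) ^ q)) *
              (∫⁻ x, ENNReal.ofReal (c * (1 + ‖x‖) ^ (-q)) *
                ENNReal.ofReal (‖w x‖ ^ p))) := by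
          congr 1
          exact lintegral_congr fun t => (ENNReal.ofReal_mul (by positivity)).symm
      _ = _ := (mul_assoc _ _ _).symm
end
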